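/- arXiv:2602.20325 — 3 statements merged into one kernel-verified Lean document; each statement's English description precedes it below -/
import Mathlib

section
/- Let C ⊆ ℝⁿ be a convex body with C ⊆ x + R·B₂ⁿ for some x ∈ ℝⁿ and R > 0. Then |C| ≤ (n+1) ω_{n−1} R^{n−1} r(C), where r(C) is the inradius of C and ω_{n−1} is the volume of the (n−1)-dimensional Euclidean unit ball. -/
open MeasureTheory Metric Set
open scoped RealInnerProductSpace ENNReal

noncomputable section

/-- The inradius of a set `C`: the maximal radius of a Euclidean ball contained in `C`. -/
def inradius {n : ℕ} (C : Set (EuclideanSpace ℝ (Fin n))) : ℝ :=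
  sSup {r : ℝ | ∃ x : EuclideanSpace ℝ (Fin n), closedBall x r ⊆ C}

lemma sum_pad {M : Type*} [AddCommMonoid M] {k d : ℕ} (h : k ≤ d) (f : Fin k → M) :
    ∑ i : Fin d, (if hi : (i : ℕ) < k then f ⟨i, hi⟩ else 0) = ∑ j : Fin k, f j := by
  rw [Fin.sum_univ_eq_sum_range (fun j => if hi : j < k then f ⟨j, hi⟩ else 0) d]
  have h2 : ∑ j : Fin k, f j
      = ∑ i ∈ Finset.range k, (if hi : i < k then f ⟨i, hi⟩ else 0) := by
    rw [← Fin.sum_univ_eq_sum_range (fun j => if hi : j < k then f ⟨j, hi⟩ else 0) k]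
    apply Finset.sum_congr rfl
    intro i _
    simp
  rw [h2]
  symm
  apply Finset.sum_subset (Finset.range_subset_range.2 h)
  intro i _ hik
  rw [dif_neg (Finset.mem_range.not.1 hik)]

lemma isCompact_convexHull_of_isCompact {E : Type*} [NormedAddCommGroup E] [NormedSpace ℝ E]
    [FiniteDimensional ℝ E] {s : Set E} (hs : IsCompact s) (hne : s.Nonempty) :
    IsCompact (convexHull ℝ s) := by
  obtain ⟨x₀, hx₀⟩ := hne
  set d := Module.finrank ℝ E with hd
  have hf : Continuous fun p : (Fin (d+1) → ℝ) × (Fin (d+1) → E) => ∑ i, p.1 i • p.2 i :=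
    continuous_finset_sum _ fun i _ =>
      ((continuous_apply i).comp continuous_fst).smul ((continuous_apply i).comp continuous_snd)
  have hT : IsCompact ((stdSimplex ℝ (Fin (d+1))) ×ˢ (Set.univ.pi fun _ : Fin (d+1) => s)) :=
    (isCompact_stdSimplex _ _).prod (isCompact_univ_pi fun _ => hs)
  have himg : convexHull ℝ s = (fun p : (Fin (d+1) → ℝ) × (Fin (d+1) → E) =>
      ∑ i, p.1 i • p.2 i) '' ((stdSimplex ℝ (Fin (d+1))) ×ˢ (Set.univ.pi fun _ : Fin (d+1) => s)) := by
    apply Subset.antisymm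
    · intro x hx
      rw [convexHull_eq_union] at hx
      simp only [mem_iUnion] at hx
      obtain ⟨t, hts, hai, hxt⟩ := hx
      have hcard : t.card ≤ d + 1 := by
        have h1 := hai.card_le_finrank_succ
        rw [Fintype.card_coe] at h1
        exact h1.trans (by
          have := Submodule.finrank_le (vectorSpan ℝ (Set.range ((↑) : ↥t → E)))
          omega)
      obtain ⟨w, hw₀, hw₁, hwx⟩ := Finset.mem_convexHull.1 hxt
      rw [Finset.centerMass_eq_of_sum_1 _ _ hw₁] at hwx
      set e := t.equivFin with he
      set W : Fin (d+1) → ℝ :=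
        fun i => if hi : (i : ℕ) < t.card then w ((e.symm ⟨i, hi⟩ : ↥t) : E) else 0 with hW
      set Y : Fin (d+1) → E :=
        fun i => if hi : (i : ℕ) < t.card then ((e.symm ⟨i, hi⟩ : ↥t) : E) else x₀ with hY
      refine ⟨⟨W, Y⟩, ⟨⟨fun i => ?_, ?_⟩, fun i _ => ?_⟩, ?_⟩
      · simp only [hW]
        split
        · exact hw₀ _ (Finset.coe_mem _)
        · exact le_refl 0
      · have : ∑ i, W i = ∑ j : Fin t.card, w ((e.symm j : ↥t) : E) :=
          sum_pad hcard (fun j => w ((e.symm j : ↥t) : E))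
        rw [this, Equiv.sum_comp e.symm (fun a : ↥t => w (a : E)), Finset.sum_coe_sort t w, hw₁]
      · simp only [hY]
        split
        · exact hts (Finset.coe_mem _)
        · exact hx₀
      · show ∑ i, W i • Y i = x
        have hpt : ∀ i : Fin (d+1), W i • Y i
            = if hi : (i : ℕ) < t.card then w ((e.symm ⟨i, hi⟩ : ↥t) : E) • ((e.symm ⟨i, hi⟩ : ↥t) : E) else 0 := by
          intro i
          by_cases hi : (i : ℕ) < t.card <;> simp [hW, hY, hi]
        rw [Finset.sum_congr rfl fun i _ => hpt i,
          sum_pad hcard (fun j => w ((e.symm j : ↥t) : E) • ((e.symm j : ↥t) : E)),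
          Equiv.sum_comp e.symm (fun a : ↥t => w (a : E) • (a : E)),
          Finset.sum_coe_sort t (fun y => w y • y)]
        rw [← hwx]
        exact Finset.sum_congr rfl fun y _ => rfl
    · rintro _ ⟨⟨w, y⟩, ⟨hw, hy⟩, rfl⟩
      have := Finset.centerMass_mem_convexHull (Finset.univ : Finset (Fin (d+1)))
        (fun i _ => hw.1 i) (by rw [hw.2]; norm_num)
        (fun i _ => hy i (mem_univ i))
      rw [Finset.centerMass_eq_of_sum_1 _ y hw.2] at this
      simpa using this
  rw [himg]
  exact hT.image hf

lemma exists_unit_vector (m : ℕ) : ∃ e : EuclideanSpace ℝ (Fin (m+1)), ‖e‖ = 1 :=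
  ⟨EuclideanSpace.single 0 1, by simp⟩

lemma inradius_spec {m : ℕ} {C : Set (EuclideanSpace ℝ (Fin (m+1)))}
    (hCc : IsCompact C) (hCint : (interior C).Nonempty) :
    0 < inradius C ∧ (∃ c, closedBall c (inradius C) ⊆ C) ∧
      (∀ y : EuclideanSpace ℝ (Fin (m+1)), ∀ ρ : ℝ, closedBall y ρ ⊆ C → ρ ≤ inradius C) ∧
      Cᶜ.Nonempty := by
  obtain ⟨e, he⟩ := exists_unit_vector m
  obtain ⟨M, hM0⟩ := hCc.isBounded.subset_closedBall 0
  set M' := max M 0 with hM'def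
  have hM'0 : 0 ≤ M' := le_max_right _ _
  have hM : C ⊆ closedBall 0 M' := hM0.trans (closedBall_subset_closedBall (le_max_left _ _))
  have hCne : C.Nonempty := ⟨_, interior_subset hCint.choose_spec⟩
  -- boundedness of the radius set
  have hbdd : BddAbove {r : ℝ | ∃ y : EuclideanSpace ℝ (Fin (m+1)), closedBall y r ⊆ C} := by
    refine ⟨2 * M', fun ρ hρ => ?_⟩
    obtain ⟨y, hy⟩ := hρ
    rcases le_or_gt ρ 0 with h | h
    · linarith
    · have hyC : y ∈ C := hy (mem_closedBall_self h.le)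
      have hp : y + ρ • e ∈ C := by
        apply hy
        simp [mem_closedBall, dist_eq_norm, norm_smul, he, abs_of_pos h]
      have h1 : dist (y + ρ • e) y = ρ := by
        simp [dist_eq_norm, norm_smul, he, abs_of_pos h]
      have h2 := hM hp
      have h3 := hM hyC
      rw [mem_closedBall] at h2 h3
      calc ρ = dist (y + ρ • e) y := h1.symm
        _ ≤ dist (y + ρ • e) 0 + dist 0 y := dist_triangle _ _ _
        _ ≤ M' + M' := by rw [dist_comm 0 y]; exact add_le_add h2 h3
        _ = 2 * M' := by ring
  -- complement is nonempty
  have hcc : Cᶜ.Nonempty := by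
    refine ⟨(M' + 1) • e, fun hmem => ?_⟩
    have := hM hmem
    rw [mem_closedBall, dist_zero_right, norm_smul, he, mul_one] at this
    rw [Real.norm_eq_abs, abs_of_nonneg (by linarith)] at this
    linarith
  have key : ∀ (y : EuclideanSpace ℝ (Fin (m+1))) (ρ : ℝ), (∀ z ∈ Cᶜ, ρ ≤ dist y z) → ρ ≤ infDist y Cᶜ := by
    intro y ρ h
    refine le_of_not_gt fun hlt => ?_
    obtain ⟨z, hz, hdz⟩ := (infDist_lt_iff hcc).1 hlt
    exact absurd hdz (not_lt.2 (h z hz))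
  -- maximize infDist
  obtain ⟨c, hcC, hcmax⟩ := hCc.exists_isMaxOn hCne (continuous_infDist_pt Cᶜ).continuousOn
  obtain ⟨y₀, hy₀⟩ := hCint
  obtain ⟨ε, hε, hball⟩ := Metric.mem_nhds_iff.1 (mem_interior_iff_mem_nhds.1 hy₀)
  have hy₀C : y₀ ∈ C := interior_subset hy₀
  have hfy₀ : ε / 2 ≤ infDist y₀ Cᶜ := by
    apply key
    intro z hz
    have : z ∉ ball y₀ ε := fun hzb => hz (hball hzb)
    rw [mem_ball, dist_comm] at this
    linarith [not_lt.1 this]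
  set r := infDist c Cᶜ with hrdef
  have hrpos : 0 < r := lt_of_lt_of_le (by linarith) (hfy₀.trans (hcmax hy₀C))
  have hob : ball c r ⊆ C := by
    intro z hz
    by_contra hzC
    have h1 : infDist c Cᶜ ≤ dist c z := infDist_le_dist_of_mem hzC
    rw [mem_ball, dist_comm] at hz
    exact absurd h1 (not_le.2 (lt_of_le_of_lt (le_of_eq rfl) hz))
  have hcb : closedBall c r ⊆ C := by
    rw [← closure_ball c hrpos.ne']
    exact (closure_minimal hob hCc.isClosed)
  have hub : ∀ (y : EuclideanSpace ℝ (Fin (m+1))) (ρ : ℝ), closedBall y ρ ⊆ C → ρ ≤ r := by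
    intro y ρ hy
    rcases le_or_gt ρ 0 with h | h
    · linarith
    · have hyC : y ∈ C := hy (mem_closedBall_self h.le)
      have h1 : ρ ≤ infDist y Cᶜ := by
        apply key
        intro z hz
        have : z ∉ closedBall y ρ := fun hzb => hz (hy hzb)
        rw [mem_closedBall, dist_comm] at this
        linarith [not_le.1 this]
      exact h1.trans (hcmax hyC)
  have hSne : (ε / 2) ∈ {r : ℝ | ∃ y : EuclideanSpace ℝ (Fin (m+1)), closedBall y r ⊆ C} :=
    ⟨y₀, (closedBall_subset_ball (by linarith)).trans hball⟩
  have hinr : inradius C = r := by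
    apply le_antisymm
    · exact csSup_le ⟨_, hSne⟩ fun ρ ⟨y, hy⟩ => hub y ρ hy
    · exact le_csSup hbdd ⟨c, hcb⟩
  rw [hinr]
  exact ⟨hrpos, ⟨c, hcb⟩, hub, hcc⟩

lemma exists_unit_normal {m : ℕ} {C : Set (EuclideanSpace ℝ (Fin (m+1)))}
    (hCconv : Convex ℝ C) (hCint : (interior C).Nonempty)
    {z : EuclideanSpace ℝ (Fin (m+1))} (hz : z ∉ interior C) :
    ∃ u : EuclideanSpace ℝ (Fin (m+1)), ‖u‖ = 1 ∧ ∀ y ∈ C, ⟪u, y⟫ ≤ ⟪u, z⟫ := by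
  obtain ⟨f, hf⟩ := geometric_hahn_banach_open_point (hCconv.interior) isOpen_interior hz
  obtain ⟨y₀, hy₀⟩ := hCint
  have hC : ∀ y ∈ C, f y ≤ f z := by
    intro y hy
    have hseq : ∀ k : ℕ, (1/(k+1:ℝ)) • y₀ + (1 - 1/(k+1:ℝ)) • y ∈ interior C := by
      intro k
      refine hCconv.combo_interior_self_mem_interior hy₀ hy (by positivity) ?_ (by ring)
      have h1 : 1/(k+1:ℝ) ≤ 1 := by
        rw [div_le_one (by positivity)]
        linarith [Nat.cast_nonneg (α := ℝ) k]
      linarith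
    have hlim : Filter.Tendsto (fun k : ℕ => (1/(k+1:ℝ)) • y₀ + (1 - 1/(k+1:ℝ)) • y)
        Filter.atTop (nhds y) := by
      have h0 : Filter.Tendsto (fun k : ℕ => 1/(k+1:ℝ)) Filter.atTop (nhds 0) :=
        tendsto_one_div_add_atTop_nhds_zero_nat
      have := (h0.smul_const y₀).add ((((tendsto_const_nhds (α := ℕ) (x := (1:ℝ))).sub h0)).smul_const y)
      simpa using this
    exact le_of_tendsto ((f.continuous.tendsto y).comp hlim)
      (Filter.Eventually.of_forall fun k => (hf _ (hseq k)).le)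
  have hfy₀ : f y₀ < f z := hf y₀ hy₀
  set v := (InnerProductSpace.toDual ℝ (EuclideanSpace ℝ (Fin (m+1)))).symm f with hv
  have hvf : ∀ w, ⟪v, w⟫ = f w := fun w => InnerProductSpace.toDual_symm_apply
  have hvne : v ≠ 0 := by
    intro h0
    rw [← hvf y₀, ← hvf z, h0, inner_zero_left, inner_zero_left] at hfy₀
    exact lt_irrefl _ hfy₀
  refine ⟨‖v‖⁻¹ • v, ?_, ?_⟩
  · rw [norm_smul, norm_inv, norm_norm, inv_mul_cancel₀ (norm_ne_zero_iff.2 hvne)]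
  · intro y hy
    rw [real_inner_smul_left, real_inner_smul_left, hvf, hvf]
    exact mul_le_mul_of_nonneg_left (hC y hy) (by positivity)

lemma exists_touching_normal {m : ℕ} {C : Set (EuclideanSpace ℝ (Fin (m+1)))}
    (hCc : IsCompact C) (hCconv : Convex ℝ C) (hCint : (interior C).Nonempty)
    {c : EuclideanSpace ℝ (Fin (m+1))} {r : ℝ} (hr : 0 < r)
    (hball : closedBall c r ⊆ C)
    (hmax : ∀ (y : EuclideanSpace ℝ (Fin (m+1))) (ρ : ℝ), closedBall y ρ ⊆ C → ρ ≤ r)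
    (hcc : Cᶜ.Nonempty)
    (v : EuclideanSpace ℝ (Fin (m+1))) (hv : ‖v‖ = 1) :
    ∃ u : EuclideanSpace ℝ (Fin (m+1)), ‖u‖ = 1 ∧ (∀ y ∈ C, ⟪u, y - c⟫ ≤ r) ∧ 0 ≤ ⟪u, v⟫ := by
  set t : ℕ → ℝ := fun k => r / 2 * (1 / (k + 1 : ℝ)) with htdef
  have htpos : ∀ k, 0 < t k := fun k => by positivity
  have htle : ∀ k, t k ≤ r / 2 := by
    intro k
    have h1 : 1 / (k + 1 : ℝ) ≤ 1 := by
      rw [div_le_one (by positivity)]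
      linarith [Nat.cast_nonneg (α := ℝ) k]
    calc t k = r / 2 * (1 / (k + 1 : ℝ)) := rfl
      _ ≤ r / 2 * 1 := by apply mul_le_mul_of_nonneg_left h1; linarith
      _ = r / 2 := mul_one _
  have ht0 : Filter.Tendsto t Filter.atTop (nhds 0) := by
    have := tendsto_one_div_add_atTop_nhds_zero_nat.const_mul (r / 2)
    simpa [htdef, one_div] using this
  -- for each k produce a unit normal
  have main : ∀ k : ℕ, ∃ u : EuclideanSpace ℝ (Fin (m+1)), ‖u‖ = 1 ∧
      (∀ y ∈ C, ⟪u, y - c⟫ ≤ r + (t k)^2 + t k * ⟪u, v⟫) ∧ - t k ≤ ⟪u, v⟫ := by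
    intro k
    have htk := htpos k
    -- the shifted center is in C
    have hmem : c + t k • v ∈ C := by
      apply hball
      simp only [mem_closedBall, dist_eq_norm, add_sub_cancel_left, norm_smul, hv, mul_one,
        Real.norm_eq_abs, abs_of_pos htk]
      linarith [htle k]
    -- infDist of shifted center is at most r
    have hinf : infDist (c + t k • v) Cᶜ ≤ r := by
      by_contra hlt
      push_neg at hlt
      have hob : ball (c + t k • v) (infDist (c + t k • v) Cᶜ) ⊆ C := by
        intro z hz
        by_contra hzC
        have h1 : infDist (c + t k • v) Cᶜ ≤ dist (c + t k • v) z := infDist_le_dist_of_mem hzC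
        rw [mem_ball, dist_comm] at hz
        linarith
      have hcb : closedBall (c + t k • v) (infDist (c + t k • v) Cᶜ) ⊆ C := by
        rw [← closure_ball _ (by linarith : (0:ℝ) < infDist (c + t k • v) Cᶜ).ne']
        exact closure_minimal hob hCc.isClosed
      linarith [hmax _ _ hcb]
    obtain ⟨z, hzc, hdz⟩ := (infDist_lt_iff hcc).1
      (lt_of_le_of_lt hinf (by nlinarith : r < r + (t k)^2))
    have hzint : z ∉ interior C := fun hzi => hzc (interior_subset hzi)
    obtain ⟨u, hu1, hu2⟩ := exists_unit_normal hCconv hCint hzint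
    have hkey : ∀ y ∈ C, ⟪u, y - c⟫ ≤ r + (t k)^2 + t k * ⟪u, v⟫ := by
      intro y hy
      have h1 : ⟪u, y⟫ ≤ ⟪u, z⟫ := hu2 y hy
      have h2 : ⟪u, z - (c + t k • v)⟫ ≤ r + (t k)^2 := by
        calc ⟪u, z - (c + t k • v)⟫ ≤ ‖u‖ * ‖z - (c + t k • v)‖ := real_inner_le_norm _ _
          _ = ‖z - (c + t k • v)‖ := by rw [hu1, one_mul]
          _ = dist (c + t k • v) z := by rw [dist_eq_norm, norm_sub_rev]
          _ ≤ r + (t k)^2 := hdz.le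
      have h3 : ⟪u, z - (c + t k • v)⟫ = ⟪u, z⟫ - ⟪u, c⟫ - t k * ⟪u, v⟫ := by
        rw [inner_sub_right, inner_add_right, real_inner_smul_right]; ring
      have h4 : ⟪u, y - c⟫ = ⟪u, y⟫ - ⟪u, c⟫ := by rw [inner_sub_right]
      linarith
    refine ⟨u, hu1, hkey, ?_⟩
    have hmem2 : c + r • u ∈ C := by
      apply hball
      simp only [mem_closedBall, dist_eq_norm, add_sub_cancel_left, norm_smul, hu1, mul_one,
        Real.norm_eq_abs, abs_of_pos hr, le_refl]
    have := hkey _ hmem2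
    rw [add_sub_cancel_left, real_inner_smul_right, real_inner_self_eq_norm_sq, hu1] at this
    nlinarith
  choose u hu1 hu2 hu3 using main
  have husph : ∀ k, u k ∈ sphere (0 : EuclideanSpace ℝ (Fin (m+1))) 1 := by
    intro k; rw [mem_sphere_zero_iff_norm]; exact hu1 k
  obtain ⟨ustar, hustar, φ, hφ, hconv⟩ := (isCompact_sphere (0 : EuclideanSpace ℝ (Fin (m+1))) 1).tendsto_subseq husph
  have htφ : Filter.Tendsto (fun k => t (φ k)) Filter.atTop (nhds 0) :=
    ht0.comp hφ.tendsto_atTop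
  refine ⟨ustar, mem_sphere_zero_iff_norm.1 hustar, ?_, ?_⟩
  · intro y hy
    have hlim : Filter.Tendsto (fun k => ⟪u (φ k), y - c⟫) Filter.atTop (nhds ⟪ustar, y - c⟫) :=
      hconv.inner tendsto_const_nhds
    have hlim2 : Filter.Tendsto (fun k => r + (t (φ k))^2 + t (φ k)) Filter.atTop (nhds r) := by
      have := ((tendsto_const_nhds (α := ℕ) (x := r)).add (htφ.pow 2)).add htφ
      simpa using this
    apply le_of_tendsto_of_tendsto' hlim hlim2
    intro k
    have hb : ⟪u (φ k), v⟫ ≤ 1 := by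
      calc ⟪u (φ k), v⟫ ≤ ‖u (φ k)‖ * ‖v‖ := real_inner_le_norm _ _
        _ = 1 := by rw [hu1, hv, mul_one]
    have := hu2 (φ k) y hy
    have htk := (htpos (φ k)).le
    nlinarith
  · have hlim : Filter.Tendsto (fun k => ⟪u (φ k), v⟫) Filter.atTop (nhds ⟪ustar, v⟫) :=
      hconv.inner tendsto_const_nhds
    have hneg : Filter.Tendsto (fun k => - t (φ k)) Filter.atTop (nhds 0) := by
      have := htφ.neg; simpa using this
    exact le_of_tendsto_of_tendsto' hneg hlim (fun k => hu3 (φ k))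

lemma exists_cover {m : ℕ} {C : Set (EuclideanSpace ℝ (Fin (m+1)))}
    (hCc : IsCompact C) (hCconv : Convex ℝ C) (hCint : (interior C).Nonempty)
    {c : EuclideanSpace ℝ (Fin (m+1))} {r : ℝ} (hr : 0 < r)
    (hball : closedBall c r ⊆ C)
    (hmax : ∀ (y : EuclideanSpace ℝ (Fin (m+1))) (ρ : ℝ), closedBall y ρ ⊆ C → ρ ≤ r)
    (hcc : Cᶜ.Nonempty) :
    ∃ t : Finset (EuclideanSpace ℝ (Fin (m+1))), t.card ≤ m + 2 ∧
      (∀ u ∈ t, ‖u‖ = 1) ∧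
      ∀ y ∈ C, ∃ u ∈ t, 0 ≤ ⟪u, y - c⟫ ∧ ⟪u, y - c⟫ ≤ r := by
  set N := {u : EuclideanSpace ℝ (Fin (m+1)) | ‖u‖ = 1 ∧ ∀ y ∈ C, ⟪u, y - c⟫ ≤ r} with hN
  -- N is a nonempty compact set
  have hNsub : N ⊆ sphere 0 1 := fun u hu => mem_sphere_zero_iff_norm.2 hu.1
  have hNclosed : IsClosed N := by
    have heq : N = sphere 0 1 ∩ ⋂ y ∈ C, {u | ⟪u, y - c⟫ ≤ r} := by
      ext u
      simp only [hN, mem_setOf_eq, mem_inter_iff, mem_sphere_zero_iff_norm, mem_iInter,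
        mem_setOf_eq]
    rw [heq]
    exact isClosed_sphere.inter (isClosed_biInter fun y _ =>
      isClosed_le (Continuous.inner continuous_id continuous_const) continuous_const)
  have hNcpt : IsCompact N := (isCompact_sphere 0 1).of_isClosed_subset hNclosed hNsub
  have hNne : N.Nonempty := by
    obtain ⟨e, he⟩ := exists_unit_vector m
    obtain ⟨u, h1, h2, _⟩ := exists_touching_normal hCc hCconv hCint hr hball hmax hcc e he
    exact ⟨u, h1, h2⟩
  -- 0 is in the convex hull of N
  have h0mem : (0 : EuclideanSpace ℝ (Fin (m+1))) ∈ convexHull ℝ N := by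
    by_contra h0
    have hKcpt : IsCompact (convexHull ℝ N) := isCompact_convexHull_of_isCompact hNcpt hNne
    obtain ⟨f, s, hfs, hs0⟩ :=
      geometric_hahn_banach_closed_point (convex_convexHull ℝ N) hKcpt.isClosed h0
    have hs : s < 0 := by simpa using hs0
    set w := (InnerProductSpace.toDual ℝ (EuclideanSpace ℝ (Fin (m+1)))).symm f with hwdef
    have hwf : ∀ x, ⟪w, x⟫ = f x := fun x => InnerProductSpace.toDual_symm_apply
    have hwne : w ≠ 0 := by
      obtain ⟨u₀, hu₀⟩ := hNne
      intro h
      have := hfs u₀ (subset_convexHull ℝ N hu₀)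
      rw [← hwf, h, inner_zero_left] at this
      linarith
    have hwn : ‖(‖w‖⁻¹ • w)‖ = 1 := by
      rw [norm_smul, norm_inv, norm_norm, inv_mul_cancel₀ (norm_ne_zero_iff.2 hwne)]
    obtain ⟨u, hu1, hu2, hu3⟩ :=
      exists_touching_normal hCc hCconv hCint hr hball hmax hcc (‖w‖⁻¹ • w) hwn
    have h1 : f u < s := hfs u (subset_convexHull ℝ N ⟨hu1, hu2⟩)
    rw [real_inner_smul_right] at hu3
    have h2 : ⟪u, w⟫ = f u := by rw [real_inner_comm]; exact hwf u
    rw [h2] at hu3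
    nlinarith [inv_pos.2 (norm_pos_iff.2 hwne)]
  -- Caratheodory
  rw [convexHull_eq_union] at h0mem
  simp only [mem_iUnion] at h0mem
  obtain ⟨t, hts, hai, h0t⟩ := h0mem
  have hcard : t.card ≤ m + 2 := by
    have h1 := hai.card_le_finrank_succ
    rw [Fintype.card_coe] at h1
    have h2 := Submodule.finrank_le (vectorSpan ℝ (Set.range ((↑) : ↥t → EuclideanSpace ℝ (Fin (m+1)))))
    rw [finrank_euclideanSpace_fin] at h2
    omega
  obtain ⟨w, hw0, hw1, hwc⟩ := Finset.mem_convexHull.1 h0t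
  rw [Finset.centerMass_eq_of_sum_1 _ _ hw1] at hwc
  refine ⟨t, hcard, fun u hu => (hts hu).1, ?_⟩
  intro y hy
  have hexpos : ∃ u₀ ∈ t, 0 < w u₀ := by
    by_contra hcon
    push_neg at hcon
    have := Finset.sum_nonpos hcon
    rw [hw1] at this
    linarith
  obtain ⟨u₀, hu₀t, hu₀⟩ := hexpos
  by_contra hcon
  push_neg at hcon
  have hneg : ∀ u ∈ t, ⟪u, y - c⟫ < 0 ∨ r < ⟪u, y - c⟫ := by
    intro u hu
    rcases lt_or_ge (⟪u, y - c⟫) 0 with h | h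
    · exact Or.inl h
    · exact Or.inr (lt_of_not_ge fun hle => absurd hle (by simpa using hcon u hu h))
  have hneg' : ∀ u ∈ t, ⟪u, y - c⟫ < 0 := by
    intro u hu
    rcases hneg u hu with h | h
    · exact h
    · exact absurd ((hts hu).2 y hy) (not_le.2 h)
  have hsum : ∑ u ∈ t, w u * ⟪u, y - c⟫ = 0 := by
    have : ⟪∑ u ∈ t, w u • u, y - c⟫ = (0:ℝ) := by
      have hwc' : ∑ u ∈ t, w u • u = 0 := by simpa using hwc
      rw [hwc', inner_zero_left]
    rw [sum_inner] at this
    rw [← this]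
    exact Finset.sum_congr rfl fun u _ => by rw [real_inner_smul_left]
  have hlt : ∑ u ∈ t, w u * ⟪u, y - c⟫ < ∑ u ∈ t, (0:ℝ) := by
    apply Finset.sum_lt_sum
    · intro u hu
      exact mul_nonpos_iff.2 (Or.inl ⟨hw0 u hu, (hneg' u hu).le⟩)
    · exact ⟨u₀, hu₀t, mul_neg_of_pos_of_neg hu₀ (hneg' u₀ hu₀t)⟩
  rw [Finset.sum_const, smul_zero, hsum] at hlt
  exact lt_irrefl 0 hlt

lemma slab_volume {m : ℕ} (u x : EuclideanSpace ℝ (Fin (m+1))) (hu : ‖u‖ = 1) (a r R : ℝ) :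
    volume {y : EuclideanSpace ℝ (Fin (m+1)) | y ∈ closedBall x R ∧ ⟪u, y⟫ ∈ Icc a (a + r)}
      ≤ ENNReal.ofReal r * volume (closedBall (0 : EuclideanSpace ℝ (Fin m)) R) := by
  -- an orthonormal basis whose first vector is `u`
  have hortho : Orthonormal ℝ (({0} : Set (Fin (m+1))).restrict
      (fun _ => u : Fin (m+1) → EuclideanSpace ℝ (Fin (m+1)))) := by
    constructor
    · intro i; exact hu
    · intro i j hij
      exact absurd (Subtype.ext ((Set.mem_singleton_iff.1 i.2).trans
        (Set.mem_singleton_iff.1 j.2).symm)) hij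
  obtain ⟨b, hb⟩ := hortho.exists_orthonormalBasis_extension_of_card_eq
    (by simp [finrank_euclideanSpace_fin]) (v := fun _ => u)
  have hb0 : b 0 = u := hb 0 rfl
  have hrepr : ∀ y : EuclideanSpace ℝ (Fin (m+1)), ⟪u, y⟫ = b.repr y 0 := by
    intro y
    rw [← hb0, b.repr_apply_apply]
  -- transfer to coordinates
  set S₂ : Set (EuclideanSpace ℝ (Fin (m+1))) :=
    {z | z ∈ closedBall (b.repr x) R ∧ z 0 ∈ Icc a (a + r)} with hS₂def
  have hS₂meas : MeasurableSet S₂ := by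
    apply measurableSet_closedBall.inter
    exact (EuclideanSpace.proj (0 : Fin (m+1))).continuous.measurable measurableSet_Icc
  have hpre : {y : EuclideanSpace ℝ (Fin (m+1)) | y ∈ closedBall x R ∧ ⟪u, y⟫ ∈ Icc a (a + r)}
      = ⇑b.repr ⁻¹' S₂ := by
    ext y
    simp only [hS₂def, mem_setOf_eq, mem_preimage, mem_closedBall]
    rw [b.repr.dist_map, hrepr]
  rw [hpre, (b.measurePreserving_repr).measure_preimage hS₂meas.nullMeasurableSet]
  -- split off the first coordinate
  set e₁ := (MeasurableEquiv.toLp 2 (Fin (m+1) → ℝ)).symm with he₁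
  set e₂ := MeasurableEquiv.piFinSuccAbove (fun _ : Fin (m+1) => ℝ) 0 with he₂
  set e₃ := (MeasurableEquiv.toLp 2 (Fin m → ℝ)).symm with he₃
  set x' : EuclideanSpace ℝ (Fin m) := WithLp.toLp 2 (fun j => b.repr x ((0 : Fin (m+1)).succAbove j)) with hx'
  set T : Set (Fin m → ℝ) := ⇑e₃.symm ⁻¹' (closedBall x' R) with hT
  have hTmeas : MeasurableSet T := e₃.symm.measurable measurableSet_closedBall
  have hQmeas : MeasurableSet (Icc a (a + r) ×ˢ T) := measurableSet_Icc.prod hTmeas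
  have hsub : S₂ ⊆ (⇑e₂ ∘ ⇑e₁) ⁻¹' (Icc a (a + r) ×ˢ T) := by
    intro z hz
    obtain ⟨hz1, hz2⟩ := hz
    have happ : (⇑e₂ ∘ ⇑e₁) z = (z 0, fun j => z ((0 : Fin (m+1)).succAbove j)) := by
      rfl
    rw [mem_preimage, happ, mem_prod]
    refine ⟨hz2, ?_⟩
    -- tail lies in the ball of radius R
    simp only [hT, mem_preimage]
    have he₃id : (⇑e₃.symm (fun j => z ((0 : Fin (m+1)).succAbove j)) : EuclideanSpace ℝ (Fin m))
        = WithLp.toLp 2 (fun j => z ((0 : Fin (m+1)).succAbove j)) := rfl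
    rw [mem_closedBall, he₃id]
    rw [mem_closedBall] at hz1
    rw [EuclideanSpace.dist_eq] at hz1 ⊢
    have hR0 : 0 ≤ R := le_trans (Real.sqrt_nonneg _) hz1
    have hmono : ∑ j : Fin m, dist ((WithLp.toLp 2 (fun j => z ((0 : Fin (m+1)).succAbove j)) :
          EuclideanSpace ℝ (Fin m)) j) (x' j) ^ 2
        ≤ ∑ i : Fin (m+1), dist (z i) (b.repr x i) ^ 2 := by
      rw [Fin.sum_univ_succAbove (fun i => dist (z i) (b.repr x i) ^ 2) 0]
      exact le_add_of_nonneg_left (by positivity)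
    exact le_trans (Real.sqrt_le_sqrt hmono) hz1
  calc volume S₂ ≤ volume ((⇑e₂ ∘ ⇑e₁) ⁻¹' (Icc a (a + r) ×ˢ T)) := measure_mono hsub
    _ = volume (Icc a (a + r) ×ˢ T) := by
        rw [((volume_preserving_piFinSuccAbove (fun _ : Fin (m+1) => ℝ) 0).comp
          (EuclideanSpace.volume_preserving_symm_measurableEquiv_toLp (Fin (m+1)))).measure_preimage
          hQmeas.nullMeasurableSet]
    _ = volume (Icc a (a + r)) * volume T := by
        rw [Measure.volume_eq_prod, Measure.prod_prod]
    _ = ENNReal.ofReal r * volume (closedBall x' R) := by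
        rw [Real.volume_Icc, add_sub_cancel_left, hT,
          (MeasurePreserving.symm _
            (EuclideanSpace.volume_preserving_symm_measurableEquiv_toLp (Fin m))).measure_preimage
            measurableSet_closedBall.nullMeasurableSet]
    _ = ENNReal.ofReal r * volume (closedBall (0 : EuclideanSpace ℝ (Fin m)) R) := by
        rw [Measure.addHaar_closedBall_center]

/-- Claim 6.1: if a convex body `C ⊆ ℝⁿ` satisfies `C ⊆ x + R·B₂ⁿ`, then
`|C| ≤ (n+1) ω_{n-1} R^{n-1} r(C)`. -/
theorem volume_le_of_subset_ball {n : ℕ} (hn : 1 ≤ n)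
    (C : Set (EuclideanSpace ℝ (Fin n)))
    (hCc : IsCompact C) (hCconv : Convex ℝ C) (hCint : (interior C).Nonempty)
    (x : EuclideanSpace ℝ (Fin n)) (R : ℝ) (hR : 0 < R)
    (hsub : C ⊆ closedBall x R) :
    (volume C).toReal ≤
      (n + 1) * (volume (closedBall (0 : EuclideanSpace ℝ (Fin (n - 1))) 1)).toReal *
        R ^ (n - 1) * inradius C := by
  obtain ⟨m, rfl⟩ : ∃ m, n = m + 1 := ⟨n - 1, (Nat.succ_pred_eq_of_pos hn).symm⟩
  obtain ⟨hrpos, ⟨c, hball⟩, hmax, hcc⟩ := inradius_spec hCc hCint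
  set r := inradius C with hrdef
  obtain ⟨t, hcard, hunit, hcover⟩ := exists_cover hCc hCconv hCint hrpos hball hmax hcc
  have hsubsets : C ⊆ ⋃ u ∈ t, {y : EuclideanSpace ℝ (Fin (m+1)) |
      y ∈ closedBall x R ∧ ⟪u, y⟫ ∈ Icc (⟪u, c⟫) (⟪u, c⟫ + r)} := by
    intro y hy
    obtain ⟨u, hut, h1, h2⟩ := hcover y hy
    apply mem_biUnion hut
    rw [inner_sub_right] at h1 h2
    exact ⟨hsub hy, by constructor <;> [linarith; linarith]⟩
  set ω := volume (closedBall (0 : EuclideanSpace ℝ (Fin m)) 1) with hω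
  have hωfin : ω ≠ ⊤ := (isCompact_closedBall _ _).measure_lt_top.ne
  have hball_vol : volume (closedBall (0 : EuclideanSpace ℝ (Fin m)) R)
      = ENNReal.ofReal (R ^ m) * ω := by
    have := Measure.addHaar_closedBall' (volume : Measure (EuclideanSpace ℝ (Fin m))) 0 hR.le
    rwa [finrank_euclideanSpace_fin] at this
  have hstep : volume C ≤ ((m + 2 : ℕ) : ℝ≥0∞) *
      (ENNReal.ofReal r * (ENNReal.ofReal (R ^ m) * ω)) := by
    calc volume C ≤ volume (⋃ u ∈ t, {y : EuclideanSpace ℝ (Fin (m+1)) |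
          y ∈ closedBall x R ∧ ⟪u, y⟫ ∈ Icc (⟪u, c⟫) (⟪u, c⟫ + r)}) := measure_mono hsubsets
      _ ≤ ∑ u ∈ t, volume {y : EuclideanSpace ℝ (Fin (m+1)) |
          y ∈ closedBall x R ∧ ⟪u, y⟫ ∈ Icc (⟪u, c⟫) (⟪u, c⟫ + r)} :=
        measure_biUnion_finset_le t _
      _ ≤ ∑ _u ∈ t, ENNReal.ofReal r * volume (closedBall (0 : EuclideanSpace ℝ (Fin m)) R) :=
        Finset.sum_le_sum fun u hu => slab_volume u x (hunit u hu) (⟪u, c⟫) r R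
      _ = (t.card : ℝ≥0∞) * (ENNReal.ofReal r * volume (closedBall (0 : EuclideanSpace ℝ (Fin m)) R)) := by
        rw [Finset.sum_const, nsmul_eq_mul]
      _ ≤ ((m + 2 : ℕ) : ℝ≥0∞) * (ENNReal.ofReal r * volume (closedBall (0 : EuclideanSpace ℝ (Fin m)) R)) :=
        mul_le_mul_left (by exact_mod_cast Nat.cast_le.2 hcard) _
      _ = ((m + 2 : ℕ) : ℝ≥0∞) * (ENNReal.ofReal r * (ENNReal.ofReal (R ^ m) * ω)) := by
        rw [hball_vol]
  have hfin : ((m + 2 : ℕ) : ℝ≥0∞) * (ENNReal.ofReal r * (ENNReal.ofReal (R ^ m) * ω)) ≠ ⊤ := by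
    apply ENNReal.mul_ne_top (ENNReal.natCast_ne_top _)
    exact ENNReal.mul_ne_top ENNReal.ofReal_ne_top (ENNReal.mul_ne_top ENNReal.ofReal_ne_top hωfin)
  have h1 := ENNReal.toReal_mono hfin hstep
  rw [ENNReal.toReal_mul, ENNReal.toReal_mul, ENNReal.toReal_mul, ENNReal.toReal_natCast,
    ENNReal.toReal_ofReal hrpos.le, ENNReal.toReal_ofReal (by positivity)] at h1
  have hgoal : ((m : ℝ) + 2) * (r * (R ^ m * ω.toReal))
      = ((m + 1 : ℕ) + 1 : ℝ) * ω.toReal * R ^ (m + 1 - 1) * r := by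
    simp only [Nat.add_sub_cancel]
    push_cast
    ring
  calc (volume C).toReal ≤ ((m + 2 : ℕ) : ℝ) * (r * (R ^ m * ω.toReal)) := h1
    _ = ((m + 1 : ℕ) + 1 : ℝ) * ω.toReal * R ^ (m + 1 - 1) * r := by push_cast at hgoal ⊢; linarith
end
end

section
/- Let u₁, …, uₙ be unit vectors in ℝⁿ such that the simplex conv{0, u₁, …, uₙ} has inradius at least r > 0. Then for every ℵ > 0, the intersection of strips ⋂_{i=1}^n Θ_{uᵢ,ℵ} is contained in (nℵ/r)·B₂ⁿ. -/
open MeasureTheory Metric Set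
open scoped Pointwise RealInnerProductSpace

noncomputable section

/-- The strip `Θ_{u,t} = {x : |⟨x,u⟩| ≤ t}`. -/
def strip {n : ℕ} (u : EuclideanSpace ℝ (Fin n)) (t : ℝ) :
    Set (EuclideanSpace ℝ (Fin n)) :=
  {x | |⟪x, u⟫| ≤ t}

/-- Inequality (6.17): if `u₁, …, uₙ` are unit vectors such that the simplex
`conv{0, u₁, …, uₙ}` has inradius at least `r > 0`, then for every `ℵ > 0`,
`⋂ᵢ Θ_{uᵢ,ℵ} ⊆ (nℵ/r)·B₂ⁿ`. -/
theorem inter_strips_subset_ball {n : ℕ} (u : Fin n → EuclideanSpace ℝ (Fin n))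
    (hu : ∀ i, ‖u i‖ = 1) (r : ℝ) (hr : 0 < r)
    (hinr : r ≤ inradius (convexHull ℝ (insert 0 (Set.range u))))
    (ℵ : ℝ) (hℵ : 0 < ℵ) :
    (⋂ i, strip (u i) ℵ) ⊆ closedBall 0 (n * ℵ / r) := by
  intro x hx
  simp only [Set.mem_iInter, strip, Set.mem_setOf_eq] at hx
  rw [mem_closedBall, dist_zero_right]
  by_cases hx0 : x = 0
  · simp only [hx0, norm_zero]
    positivity
  have hn : (1 : ℝ) ≤ n := by
    have hn0 : n ≠ 0 := by
      rintro rfl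
      exact hx0 (Subsingleton.elim x 0)
    exact_mod_cast Nat.one_le_iff_ne_zero.2 hn0
  have hxn : 0 < ‖x‖ := norm_pos_iff.2 hx0
  set S : Set ℝ :=
    {r : ℝ | ∃ c : EuclideanSpace ℝ (Fin n),
      closedBall c r ⊆ convexHull ℝ (insert 0 (Set.range u))} with hS
  have hne : S.Nonempty := by
    by_contra h
    rw [Set.not_nonempty_iff_eq_empty] at h
    have : inradius (convexHull ℝ (insert 0 (Set.range u))) = 0 := by
      rw [inradius, ← hS, h, Real.sSup_empty]
    linarith
  have hub : inradius (convexHull ℝ (insert 0 (Set.range u))) ≤ ℵ / ‖x‖ := by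
    apply csSup_le hne
    rintro r' ⟨c, hc⟩
    rcases le_or_gt r' 0 with h | h
    · exact h.trans (by positivity)
    set s : ℝ := if 0 ≤ ⟪c, x⟫ then 1 else -1 with hsdef
    have hs2 : s * s = 1 := by
      rw [hsdef]; split_ifs <;> norm_num
    have habs : |s| = 1 := by
      rw [hsdef]; split_ifs <;> norm_num
    have hscx : 0 ≤ s * ⟪c, x⟫ := by
      rcases le_or_gt 0 ⟪c, x⟫ with hcx | hcx
      · simp only [hsdef, if_pos hcx, one_mul]; exact hcx
      · simp only [hsdef, if_neg (not_le.2 hcx), neg_one_mul]; linarith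
    set y : EuclideanSpace ℝ (Fin n) := c + (r' / ‖x‖) • (s • x) with hy
    have hymem : y ∈ closedBall c r' := by
      rw [mem_closedBall, hy]
      have : dist (c + (r' / ‖x‖) • (s • x)) c = ‖(r' / ‖x‖) • (s • x)‖ := by
        rw [dist_eq_norm]
        congr 1
        abel
      rw [this, norm_smul, norm_smul, Real.norm_eq_abs, Real.norm_eq_abs,
        habs, one_mul, abs_of_pos (by positivity : (0:ℝ) < r' / ‖x‖)]
      rw [div_mul_cancel₀ _ (ne_of_gt hxn)]
    have hyK := hc hymem
    -- the half-space {z | ⟪z, s • x⟫ ≤ ℵ} contains the convex hull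
    have hhalf : convexHull ℝ (insert 0 (Set.range u)) ⊆ {z | ⟪z, s • x⟫ ≤ ℵ} := by
      apply convexHull_min
      · rintro z (rfl | ⟨i, rfl⟩)
        · simp [hℵ.le]
        · have : ⟪u i, s • x⟫ = s * ⟪u i, x⟫ := real_inner_smul_right _ _ _
          rw [Set.mem_setOf_eq, this]
          calc s * ⟪u i, x⟫ ≤ |s * ⟪u i, x⟫| := le_abs_self _
            _ = |s| * |⟪u i, x⟫| := abs_mul _ _
            _ = |⟪x, u i⟫| := by rw [habs, one_mul, real_inner_comm]
            _ ≤ ℵ := hx i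
      · have hlin : IsLinearMap ℝ (fun z : EuclideanSpace ℝ (Fin n) => ⟪z, s • x⟫) :=
          ⟨fun a b => inner_add_left a b (s • x),
           fun m a => by rw [real_inner_smul_left]; rfl⟩
        exact convex_halfSpace_le hlin ℵ
    have hyle : ⟪y, s • x⟫ ≤ ℵ := hhalf hyK
    have hyval : ⟪y, s • x⟫ = s * ⟪c, x⟫ + r' * ‖x‖ := by
      rw [hy, inner_add_left, real_inner_smul_right c, real_inner_smul_left,
        real_inner_smul_left, real_inner_smul_right, real_inner_self_eq_norm_sq]
      have h2 : r' / ‖x‖ * (s * (s * ‖x‖ ^ 2)) = s * s * (r' * ‖x‖) := by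
        field_simp
      rw [h2, hs2, one_mul]
    have : r' * ‖x‖ ≤ ℵ := by
      rw [hyval] at hyle
      linarith
    rw [le_div_iff₀ hxn]
    exact this
  have hrx : r ≤ ℵ / ‖x‖ := le_trans hinr hub
  have h1 : ‖x‖ ≤ ℵ / r := by
    rw [le_div_iff₀ hr]
    rw [le_div_iff₀ hxn] at hrx
    linarith
  calc ‖x‖ ≤ ℵ / r := h1
    _ ≤ n * ℵ / r := by
      gcongr
      nlinarith
end
end

section
/- For every n ≥ 2, R > 1 and s ∈ (0, 1/2) there exists a constant c ∈ (0,1) depending only on n, R, s with the following property: let Ẽ ⊆ ℝⁿ be an o-symmetric ellipsoid with (1/R²)·B₂ⁿ ⊆ Ẽ ⊆ R²·B₂ⁿ and half axes a₁ ≤ … ≤ aₙ, let σ̃ ⊆ ℝⁿ be a convex cone with r(σ̃ ∩ B₂ⁿ) ≥ s/R, and let ε ∈ (0, 1/2) satisfy max_{1 ≤ i ≤ n} |aᵢ − 1| ≥ ε. Then |(Ẽ Δ B₂ⁿ) ∩ σ̃| ≥ c·ε. -/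
open MeasureTheory Metric Set
open scoped Pointwise symmDiff RealInnerProductSpace

noncomputable section

/-- A convex cone: a convex set closed under multiplication by nonnegative scalars. -/
def IsConvexCone {n : ℕ} (σ : Set (EuclideanSpace ℝ (Fin n))) : Prop :=
  Convex ℝ σ ∧ ∀ c : ℝ, 0 ≤ c → ∀ x ∈ σ, c • x ∈ σ

open scoped ENNReal

section Aux
variable {n : ℕ}

lemma parseval (b : OrthonormalBasis (Fin n) ℝ (EuclideanSpace ℝ (Fin n)))
    (x : EuclideanSpace ℝ (Fin n)) : ∑ i, ⟪x, b i⟫ ^ 2 = ‖x‖ ^ 2 := by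
  have h := b.sum_inner_mul_inner x x
  rw [real_inner_self_eq_norm_sq] at h
  rw [← h]
  exact Finset.sum_congr rfl fun i _ => by rw [sq, real_inner_comm (b i) x]

lemma cross_bound (b : OrthonormalBasis (Fin n) ℝ (EuclideanSpace ℝ (Fin n)))
    (lam : Fin n → ℝ) {Λ : ℝ} (hΛ0 : 0 ≤ Λ) (hl : ∀ i, |lam i| ≤ Λ)
    (x y : EuclideanSpace ℝ (Fin n)) :
    |∑ i, lam i * (⟪x, b i⟫ * ⟪y, b i⟫)| ≤ Λ * (‖x‖ * ‖y‖) := by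
  have h1 : |∑ i, lam i * (⟪x, b i⟫ * ⟪y, b i⟫)| ≤ ∑ i, Λ * (|⟪x, b i⟫| * |⟪y, b i⟫|) := by
    refine (Finset.abs_sum_le_sum_abs _ _).trans (Finset.sum_le_sum fun i _ => ?_)
    rw [abs_mul, abs_mul]
    exact mul_le_mul_of_nonneg_right (hl i) (by positivity)
  have h2 : ∑ i, |⟪x, b i⟫| * |⟪y, b i⟫| ≤ ‖x‖ * ‖y‖ := by
    have hcs := Finset.sum_mul_sq_le_sq_mul_sq Finset.univ
      (fun i => |⟪x, b i⟫|) (fun i => |⟪y, b i⟫|)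
    have hx : ∑ i, |⟪x, b i⟫| ^ 2 = ‖x‖ ^ 2 := by
      simp only [sq_abs]; exact parseval b x
    have hy : ∑ i, |⟪y, b i⟫| ^ 2 = ‖y‖ ^ 2 := by
      simp only [sq_abs]; exact parseval b y
    rw [hx, hy] at hcs
    have hS : 0 ≤ ∑ i, |⟪x, b i⟫| * |⟪y, b i⟫| :=
      Finset.sum_nonneg fun i _ => by positivity
    nlinarith [norm_nonneg x, norm_nonneg y, mul_nonneg (norm_nonneg x) (norm_nonneg y)]
  calc |∑ i, lam i * (⟪x, b i⟫ * ⟪y, b i⟫)| ≤ ∑ i, Λ * (|⟪x, b i⟫| * |⟪y, b i⟫|) := h1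
    _ = Λ * ∑ i, |⟪x, b i⟫| * |⟪y, b i⟫| := by rw [Finset.mul_sum]
    _ ≤ Λ * (‖x‖ * ‖y‖) := mul_le_mul_of_nonneg_left h2 hΛ0

lemma cross_expand (b : OrthonormalBasis (Fin n) ℝ (EuclideanSpace ℝ (Fin n)))
    (lam : Fin n → ℝ) (x y : EuclideanSpace ℝ (Fin n)) (α β : ℝ) :
    ∑ i, lam i * (⟪α•x + β•y, b i⟫ * ⟪α•x + β•y, b i⟫)
      = α^2 * (∑ i, lam i * (⟪x, b i⟫ * ⟪x, b i⟫))
        + (2*α*β) * (∑ i, lam i * (⟪x, b i⟫ * ⟪y, b i⟫))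
        + β^2 * (∑ i, lam i * (⟪y, b i⟫ * ⟪y, b i⟫)) := by
  rw [Finset.mul_sum, Finset.mul_sum, Finset.mul_sum, ← Finset.sum_add_distrib,
    ← Finset.sum_add_distrib]
  refine Finset.sum_congr rfl fun i _ => ?_
  rw [inner_add_left, real_inner_smul_left, real_inner_smul_left]
  ring

lemma cross_diff (b : OrthonormalBasis (Fin n) ℝ (EuclideanSpace ℝ (Fin n)))
    (lam : Fin n → ℝ) (x y : EuclideanSpace ℝ (Fin n)) :
    ∑ i, lam i * (⟪x, b i⟫ * ⟪x, b i⟫) - ∑ i, lam i * (⟪y, b i⟫ * ⟪y, b i⟫)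
      = ∑ i, lam i * (⟪x + y, b i⟫ * ⟪x - y, b i⟫) := by
  rw [← Finset.sum_sub_distrib]
  refine Finset.sum_congr rfl fun i _ => ?_
  rw [inner_add_left, inner_sub_left]
  ring

lemma cross_homog (b : OrthonormalBasis (Fin n) ℝ (EuclideanSpace ℝ (Fin n)))
    (lam : Fin n → ℝ) (x : EuclideanSpace ℝ (Fin n)) (α : ℝ) :
    ∑ i, lam i * (⟪α•x, b i⟫ * ⟪α•x, b i⟫)
      = α^2 * ∑ i, lam i * (⟪x, b i⟫ * ⟪x, b i⟫) := by
  rw [Finset.mul_sum]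
  refine Finset.sum_congr rfl fun i _ => ?_
  rw [real_inner_smul_left]
  ring

lemma cone_dir {σ' : Set (EuclideanSpace ℝ (Fin n))}
    (hσ : ∀ c : ℝ, 0 ≤ c → ∀ x ∈ σ', c • x ∈ σ')
    (v₀ : EuclideanSpace ℝ (Fin n)) (hv₀ : ‖v₀‖ = 1)
    (x₀ : EuclideanSpace ℝ (Fin n)) {ρ : ℝ} (hρ : 0 < ρ)
    (hball : closedBall x₀ ρ ⊆ σ' ∩ closedBall 0 1) :
    ∃ v : EuclideanSpace ℝ (Fin n), ‖v‖ = 1 ∧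
      ∀ x : EuclideanSpace ℝ (Fin n), x ≠ 0 → ‖‖x‖⁻¹ • x - v‖ ≤ ρ → x ∈ σ' := by
  by_cases h0 : ‖x₀‖ ≤ ρ/2
  · refine ⟨v₀, hv₀, fun x hx _ => ?_⟩
    have hxn : (0:ℝ) < ‖x‖ := norm_pos_iff.2 hx
    set y : EuclideanSpace ℝ (Fin n) := (ρ/2) • (‖x‖⁻¹ • x) with hy
    have hyσ : y ∈ σ' := by
      refine (hball ?_).1
      rw [mem_closedBall, dist_eq_norm]
      have h1 : ‖y‖ = ρ/2 := by
        rw [hy, norm_smul, norm_smul, norm_inv, norm_norm, Real.norm_eq_abs,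
          abs_of_pos (by linarith : (0:ℝ) < ρ/2)]
        field_simp
      calc ‖y - x₀‖ ≤ ‖y‖ + ‖x₀‖ := norm_sub_le _ _
        _ ≤ ρ/2 + ρ/2 := by rw [h1]; linarith
        _ = ρ := by ring
    have : (2*‖x‖/ρ) • y = x := by
      rw [hy, smul_smul, smul_smul]
      have harith : 2*‖x‖/ρ * (ρ/2) * ‖x‖⁻¹ = (ρ/ρ) * (‖x‖/‖x‖) := by
        field_simp
      rw [harith, div_self (ne_of_gt hρ), div_self (ne_of_gt hxn), one_mul, one_smul]
    rw [← this]
    exact hσ _ (by positivity) _ hyσ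
  · push_neg at h0
    have hx₀ : x₀ ≠ 0 := by
      intro h; rw [h, norm_zero] at h0; linarith
    have hx₀n : (0:ℝ) < ‖x₀‖ := norm_pos_iff.2 hx₀
    have hx₀le : ‖x₀‖ ≤ 1 := by
      have := (hball (mem_closedBall_self (le_of_lt hρ))).2
      rwa [mem_closedBall, dist_zero_right] at this
    refine ⟨‖x₀‖⁻¹ • x₀, ?_, fun x hx hclose => ?_⟩
    · rw [norm_smul, norm_inv, norm_norm, inv_mul_cancel₀ (ne_of_gt hx₀n)]
    · have hxn : (0:ℝ) < ‖x‖ := norm_pos_iff.2 hx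
      set y : EuclideanSpace ℝ (Fin n) := ‖x₀‖ • (‖x‖⁻¹ • x) with hy
      have hyσ : y ∈ σ' := by
        refine (hball ?_).1
        rw [mem_closedBall, dist_eq_norm]
        have : y - x₀ = ‖x₀‖ • (‖x‖⁻¹ • x - ‖x₀‖⁻¹ • x₀) := by
          rw [smul_sub, hy, smul_inv_smul₀ (ne_of_gt hx₀n)]
        rw [this, norm_smul, norm_norm]
        calc ‖x₀‖ * ‖‖x‖⁻¹ • x - ‖x₀‖⁻¹ • x₀‖ ≤ 1 * ρ := by
              apply mul_le_mul hx₀le hclose (norm_nonneg _) zero_le_one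
          _ = ρ := one_mul ρ
      have : (‖x‖ * ‖x₀‖⁻¹) • y = x := by
        rw [hy, smul_smul, smul_smul]
        have harith : ‖x‖ * ‖x₀‖⁻¹ * ‖x₀‖ * ‖x‖⁻¹ = (‖x₀‖/‖x₀‖) * (‖x‖/‖x‖) := by
          field_simp
        rw [harith, div_self (ne_of_gt hx₀n), div_self (ne_of_gt hxn), one_mul, one_smul]
      rw [← this]
      exact hσ _ (by positivity) _ hyσ

lemma unit_orth (v x : EuclideanSpace ℝ (Fin n)) (hv : ‖v‖ = 1) (hx : ‖x‖ = 1)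
    (hne : x - ⟪x, v⟫ • v ≠ 0) :
    ∃ f s₀ : _, ‖f‖ = 1 ∧ ⟪v, f⟫ = 0 ∧ x = ⟪x, v⟫ • v + s₀ • f ∧ ⟪x, v⟫^2 + s₀^2 = 1 := by
  set w0 := x - ⟪x, v⟫ • v with hw0
  have hw0n : (0:ℝ) < ‖w0‖ := norm_pos_iff.2 hne
  have hvw0 : ⟪v, w0⟫ = 0 := by
    rw [hw0, inner_sub_right, real_inner_smul_right, real_inner_self_eq_norm_sq, hv,
      real_inner_comm v x]
    ring
  refine ⟨‖w0‖⁻¹ • w0, ‖w0‖, ?_, ?_, ?_, ?_⟩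
  · rw [norm_smul, norm_inv, norm_norm, inv_mul_cancel₀ (ne_of_gt hw0n)]
  · rw [real_inner_smul_right, hvw0, mul_zero]
  · rw [smul_inv_smul₀ (ne_of_gt hw0n), hw0]; abel
  · have hdecomp : x = ⟪x, v⟫ • v + w0 := by rw [hw0]; abel
    have hxsq : ‖x‖^2 = ⟪x, v⟫^2 + ‖w0‖^2 := by
      have h1 : ⟪⟪x, v⟫ • v, w0⟫ = 0 := by
        rw [real_inner_smul_left, hvw0, mul_zero]
      calc ‖x‖^2 = ‖(⟪x, v⟫ • v) + w0‖^2 := by rw [← hdecomp]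
        _ = ‖⟪x, v⟫ • v‖^2 + 2*⟪⟪x, v⟫ • v, w0⟫ + ‖w0‖^2 := by
            rw [norm_add_sq_real]
        _ = ⟪x, v⟫^2 + ‖w0‖^2 := by
            rw [h1, norm_smul, Real.norm_eq_abs, hv, mul_one, sq_abs]; ring
    rw [hx] at hxsq; rw [← hxsq]; ring

lemma exists_orth_decomp (hn : 2 ≤ n)
    (b : OrthonormalBasis (Fin n) ℝ (EuclideanSpace ℝ (Fin n))) (j : Fin n)
    (v : EuclideanSpace ℝ (Fin n)) (hv : ‖v‖ = 1) :
    ∃ f : EuclideanSpace ℝ (Fin n), ∃ c₀ s₀ : ℝ, ‖f‖ = 1 ∧ ⟪v, f⟫ = 0 ∧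
      b j = c₀ • v + s₀ • f ∧ c₀^2 + s₀^2 = 1 := by
  have hbnorm : ∀ i, ‖b i‖ = 1 := fun i => b.orthonormal.1 i
  by_cases hne : b j - ⟪b j, v⟫ • v ≠ 0
  · obtain ⟨f, s₀, h1, h2, h3, h4⟩ := unit_orth v (b j) hv (hbnorm j) hne
    exact ⟨f, ⟪b j, v⟫, s₀, h1, h2, h3, h4⟩
  · push_neg at hne
    have hbj : b j = ⟪b j, v⟫ • v := sub_eq_zero.mp hne
    have hc₀ : ⟪b j, v⟫^2 = 1 := by
      have h1 : ‖b j‖ = |⟪b j, v⟫| := by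
        rw [congrArg norm hbj, norm_smul, Real.norm_eq_abs, hv, mul_one]
      rw [← sq_abs, ← h1, hbnorm j, one_pow]
    have h0n : (0:ℕ) < n := by omega
    have h1n : (1:ℕ) < n := by omega
    set i : Fin n := if j = ⟨0, h0n⟩ then ⟨1, h1n⟩ else ⟨0, h0n⟩ with hidef
    have hij : i ≠ j := by
      rw [hidef]
      by_cases h : j = ⟨0, h0n⟩
      · rw [if_pos h, h]
        intro hcon
        have := congrArg Fin.val hcon
        simp at this
      · rw [if_neg h]
        intro hcon
        exact h hcon.symm
    have hne2 : b i - ⟪b i, v⟫ • v ≠ 0 := by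
      intro hcon
      have hbi : b i = ⟪b i, v⟫ • v := sub_eq_zero.mp hcon
      have hci : ⟪b i, v⟫^2 = 1 := by
        have h1 : ‖b i‖ = |⟪b i, v⟫| := by
          rw [congrArg norm hbi, norm_smul, Real.norm_eq_abs, hv, mul_one]
        rw [← sq_abs, ← h1, hbnorm i, one_pow]
      have horth : ⟪b i, b j⟫ = 0 := b.orthonormal.2 hij
      rw [hbi, hbj, real_inner_smul_left, real_inner_smul_right,
        real_inner_self_eq_norm_sq, hv] at horth
      nlinarith [horth, hci, hc₀]
    obtain ⟨f, s₀, h1, h2, _, _⟩ := unit_orth v (b i) hv (hbnorm i) hne2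
    refine ⟨f, ⟪b j, v⟫, 0, h1, h2, ?_, by rw [hc₀]; ring⟩
    rw [zero_smul, add_zero]; exact hbj

lemma shell_volume (S : Set (EuclideanSpace ℝ (Fin n)))
    (hS : ∀ r : ℝ, 0 < r → r • S = S) {rin rout δ : ℝ}
    (hrin : 0 < rin) (hro : rin ≤ rout) (hδ : 0 ≤ δ)
    (hpow : rin^n + δ ≤ rout^n) :
    ENNReal.ofReal δ * volume (S ∩ closedBall 0 1)
      ≤ volume ((S ∩ closedBall 0 rout) \ closedBall 0 rin) := by
  have hroutpos : 0 < rout := lt_of_lt_of_le hrin hro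
  have hscale : ∀ r : ℝ, 0 < r → volume (S ∩ closedBall 0 r)
      = ENNReal.ofReal (r^n) * volume (S ∩ closedBall 0 1) := by
    intro r hr
    have h1 : S ∩ closedBall 0 r = r • (S ∩ closedBall (0 : EuclideanSpace ℝ (Fin n)) 1) := by
      rw [smul_set_inter₀ (ne_of_gt hr), hS r hr, _root_.smul_closedBall _ _ zero_le_one,
        smul_zero, Real.norm_eq_abs, abs_of_pos hr, mul_one]
    rw [h1, Measure.addHaar_smul_of_nonneg volume (le_of_lt hr), finrank_euclideanSpace_fin]
  set V := volume (S ∩ closedBall (0 : EuclideanSpace ℝ (Fin n)) 1) with hV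
  have hVtop : V ≠ ⊤ := by
    refine ne_top_of_le_ne_top ?_ (measure_mono inter_subset_right)
    exact (measure_closedBall_lt_top).ne
  have hsub : S ∩ closedBall 0 rout ⊆
      ((S ∩ closedBall 0 rout) \ closedBall 0 rin) ∪ (S ∩ closedBall 0 rin) := by
    intro x hx
    by_cases h : x ∈ closedBall (0 : EuclideanSpace ℝ (Fin n)) rin
    · exact Or.inr ⟨hx.1, h⟩
    · exact Or.inl ⟨hx, h⟩
  have hle := ((measure_mono (μ := (volume : Measure (EuclideanSpace ℝ (Fin n))))) hsub).trans
    (measure_union_le _ _)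
  rw [hscale rout hroutpos, hscale rin hrin] at hle
  have h2 : ENNReal.ofReal δ * V + ENNReal.ofReal (rin^n) * V
      ≤ volume ((S ∩ closedBall 0 rout) \ closedBall 0 rin) + ENNReal.ofReal (rin^n) * V := by
    calc ENNReal.ofReal δ * V + ENNReal.ofReal (rin^n) * V
        = (ENNReal.ofReal δ + ENNReal.ofReal (rin^n)) * V := (add_mul _ _ _).symm
      _ = ENNReal.ofReal (δ + rin^n) * V := by
          rw [← ENNReal.ofReal_add hδ (pow_nonneg hrin.le n)]
      _ ≤ ENNReal.ofReal (rout^n) * V := by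
          exact mul_le_mul_left (ENNReal.ofReal_le_ofReal (by linarith)) V
      _ ≤ _ := hle
  have hc : ENNReal.ofReal (rin^n) * V ≠ ⊤ := ENNReal.mul_ne_top ENNReal.ofReal_ne_top hVtop
  exact (ENNReal.add_le_add_iff_right hc).mp h2

end Aux

set_option maxHeartbeats 1600000 in
/-- Core claim (6.5) in the proof of Lemma 6.2: if an o-symmetric ellipsoid `Etil`
with half axes `a₁ ≤ … ≤ aₙ` (expressed in a suitable orthonormal basis) is
sandwiched between `(1/R²)·B₂ⁿ` and `R²·B₂ⁿ`, `σ̃` is a convex cone with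
`r(σ̃ ∩ B₂ⁿ) ≥ s/R`, and `max |aᵢ − 1| ≥ ε` for some `ε ∈ (0,1/2)`, then
`|(Etil Δ B₂ⁿ) ∩ σ̃| ≥ c·ε`. -/
theorem ellipsoid_far_from_ball_on_cone (n : ℕ) (hn : 2 ≤ n) (R s : ℝ)
    (hR : 1 < R) (hs : s ∈ Set.Ioo (0 : ℝ) (1 / 2)) :
    ∃ c : ℝ, c ∈ Set.Ioo (0 : ℝ) 1 ∧
      ∀ (a : Fin n → ℝ) (b : OrthonormalBasis (Fin n) ℝ (EuclideanSpace ℝ (Fin n)))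
        (Etil σ' : Set (EuclideanSpace ℝ (Fin n))) (ε : ℝ),
        (∀ i, 0 < a i) → Monotone a →
        Etil = {x : EuclideanSpace ℝ (Fin n) | ∑ i, ⟪x, b i⟫ ^ 2 / (a i) ^ 2 ≤ 1} →
        closedBall (0 : EuclideanSpace ℝ (Fin n)) (1 / R ^ 2) ⊆ Etil →
        Etil ⊆ closedBall 0 (R ^ 2) →
        IsConvexCone σ' → s / R ≤ inradius (σ' ∩ closedBall 0 1) →
        ε ∈ Set.Ioo (0 : ℝ) (1 / 2) → (∃ i, ε ≤ |a i - 1|) →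
        c * ε ≤ (volume ((Etil ∆ closedBall 0 1) ∩ σ')).toReal := by
  have hR0 : (0:ℝ) < R := lt_trans one_pos hR
  have hR21 : (1:ℝ) ≤ R^2 := by nlinarith
  have hR41 : (1:ℝ) ≤ R^4 := by nlinarith [hR21, sq_nonneg (R^2-1)]
  obtain ⟨hs0, hs2⟩ := hs
  set ρ₀ : ℝ := s/(2*R) with hρ₀def
  have hρ₀pos : 0 < ρ₀ := by positivity
  have hρ₀lt : ρ₀ < 1/4 := by
    rw [hρ₀def, div_lt_iff₀ (by positivity)]
    nlinarith
  set τ : ℝ := ρ₀/4 with hτdef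
  have hτpos : 0 < τ := by positivity
  have hτ1 : τ ≤ 1 := by rw [hτdef]; linarith
  set w : ℝ := min (ρ₀/2) (τ^2/64) with hwdef
  have hwpos : 0 < w := lt_min (by positivity) (by positivity)
  have hw1 : w ≤ ρ₀/2 := min_le_left _ _
  have hw2 : w ≤ τ^2/64 := min_le_right _ _
  have hw8 : w ≤ 1/8 := le_trans hw1 (by linarith)
  set ℓ₀ : ℝ := τ^2/32 with hℓdef
  have hℓpos : 0 < ℓ₀ := by positivity
  have hℓτ : ℓ₀ ≤ τ := by rw [hℓdef]; nlinarith
  set r₁ : ℝ := w/8 with hr₁def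
  have hr₁pos : 0 < r₁ := by positivity
  set γ : ℝ := 1/(4*(1+R^4)) with hγdef
  have hγpos : 0 < γ := by positivity
  have hγ8 : γ ≤ 1/8 := by
    rw [hγdef, div_le_div_iff₀ (by positivity) (by norm_num)]
    nlinarith
  set V₀ : ℝ≥0∞ := volume (closedBall (0 : EuclideanSpace ℝ (Fin n)) r₁) with hV₀def
  have hV₀pos : 0 < V₀ := measure_closedBall_pos volume 0 hr₁pos
  have hV₀top : V₀ ≠ ⊤ := measure_closedBall_lt_top.ne
  have hV₀r : 0 < V₀.toReal := ENNReal.toReal_pos hV₀pos.ne' hV₀top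
  set c₁ : ℝ := min (τ^2/(32*R^4)) 1 with hc₁def
  have hc₁pos : 0 < c₁ := lt_min (by positivity) one_pos
  have hc₁le : c₁ ≤ 1 := min_le_right _ _
  set c : ℝ := min (1/2) (γ * c₁ * V₀.toReal) with hcdef
  have hcpos : 0 < c := lt_min (by norm_num) (by positivity)
  refine ⟨c, ⟨hcpos, lt_of_le_of_lt (min_le_left _ _) (by norm_num)⟩, ?_⟩
  intro a b Etil σ' ε hapos hamono hEdef hEin hEout hcone hinr hεmem hex
  obtain ⟨hε0, hε2⟩ := hεmem
  obtain ⟨j, hjε⟩ := hex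
  -- axis bounds
  have horth := orthonormal_iff_ite.mp b.orthonormal
  have haxis : ∀ i, (R^2)⁻¹ ≤ a i ∧ a i ≤ R^2 := by
    intro i
    have hbn : ‖b i‖ = 1 := b.orthonormal.1 i
    have hainz : (a i)^2 ≠ 0 := pow_ne_zero 2 (ne_of_gt (hapos i))
    constructor
    · have hmem : ((R^2)⁻¹ : ℝ) • b i ∈ Etil := by
        apply hEin
        rw [mem_closedBall, dist_zero_right, norm_smul, Real.norm_eq_abs,
          abs_of_pos (by positivity : (0:ℝ) < (R^2)⁻¹), hbn, mul_one, one_div]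
      rw [hEdef] at hmem
      simp only [mem_setOf_eq] at hmem
      have hsum : ∑ k, ⟪((R^2)⁻¹ : ℝ) • b i, b k⟫^2/(a k)^2 = ((R^2)⁻¹)^2/(a i)^2 := by
        rw [Finset.sum_eq_single i]
        · rw [real_inner_smul_left, horth i i, if_pos rfl, mul_one]
        · intro k _ hk
          rw [real_inner_smul_left, horth i k, if_neg (fun hcon => hk hcon.symm),
            mul_zero]
          simp
        · intro hcon; exact absurd (Finset.mem_univ i) hcon
      rw [hsum] at hmem
      have h1 : ((R^2)⁻¹)^2 ≤ (a i)^2 := by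
        rw [div_le_one (by positivity)] at hmem
        exact hmem
      nlinarith [hapos i, h1, inv_pos.mpr (show (0:ℝ) < R^2 by positivity)]
    · have hmem : (a i) • b i ∈ Etil := by
        rw [hEdef]
        simp only [mem_setOf_eq]
        have hsum : ∑ k, ⟪(a i : ℝ) • b i, b k⟫^2/(a k)^2 = 1 := by
          rw [Finset.sum_eq_single i]
          · rw [real_inner_smul_left, horth i i, if_pos rfl, mul_one, div_self hainz]
          · intro k _ hk
            rw [real_inner_smul_left, horth i k, if_neg (fun hcon => hk hcon.symm),
              mul_zero]
            simp
          · intro hcon; exact absurd (Finset.mem_univ i) hcon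
        rw [hsum]
      have := hEout hmem
      rw [mem_closedBall, dist_zero_right, norm_smul, Real.norm_eq_abs,
        abs_of_pos (hapos i), hbn, mul_one] at this
      exact this
  -- quadratic form data
  set lam : Fin n → ℝ := fun i => ((a i)^2)⁻¹ - 1 with hlamdef
  have hne : (Finset.univ : Finset (Fin n)).Nonempty := ⟨⟨0, by omega⟩, Finset.mem_univ _⟩
  set Λ : ℝ := Finset.univ.sup' hne (fun i => |lam i|) with hΛdef
  have hΛi : ∀ i, |lam i| ≤ Λ := fun i => Finset.le_sup' (fun k => |lam k|) (Finset.mem_univ i)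
  obtain ⟨jstar, -, hjstar⟩ := Finset.exists_mem_eq_sup' hne (fun i => |lam i|)
  have hΛub : Λ ≤ R^4 := by
    have h1 := haxis jstar
    have hpos := hapos jstar
    have hsq : ((R^2)⁻¹)^2 ≤ (a jstar)^2 := pow_le_pow_left₀ (by positivity) h1.1 2
    have e1 : ((R^2)⁻¹)^2 = (R^4)⁻¹ := by
      rw [inv_pow, ← pow_mul]
    have h2 : ((a jstar)^2)⁻¹ ≤ R^4 := by
      have h3 := inv_anti₀ (show (0:ℝ) < (R^4)⁻¹ by positivity) (e1 ▸ hsq)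
      rwa [inv_inv] at h3
    have h3 : (0:ℝ) < ((a jstar)^2)⁻¹ := by positivity
    rw [hΛdef, hjstar]
    have : |lam jstar| ≤ R^4 := by
      rw [abs_le]
      constructor
      · show -(R^4) ≤ ((a jstar)^2)⁻¹ - 1
        linarith only [h3, hR41]
      · show ((a jstar)^2)⁻¹ - 1 ≤ R^4
        linarith only [h2, hR41]
    exact this
  have hΛlb : ε/R^4 ≤ Λ := by
    have hax := haxis j
    have ha := hapos j
    have h1 : ε ≤ |1 - (a j)^2| := by
      rcases abs_cases (a j - 1) with ⟨he, hc⟩ | ⟨he, hc⟩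
      · rw [he] at hjε
        rw [abs_of_nonpos (by nlinarith only [hc] : 1 - (a j)^2 ≤ 0)]
        nlinarith only [hjε, hc]
      · rw [he] at hjε
        rw [abs_of_nonneg (by nlinarith only [hc, ha] : (0:ℝ) ≤ 1 - (a j)^2)]
        nlinarith only [hjε, hc, ha]
    have e2 : lam j = (1 - (a j)^2)/(a j)^2 := by
      show ((a j)^2)⁻¹ - 1 = _
      field_simp
    have e3 : |lam j| = |1 - (a j)^2|/(a j)^2 := by
      rw [e2, abs_div, abs_of_pos (by positivity : (0:ℝ) < (a j)^2)]
    have h5 : (a j)^2 ≤ R^4 := by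
      have h6 : (a j)^2 ≤ (R^2)^2 := pow_le_pow_left₀ ha.le hax.2 2
      nlinarith only [h6]
    have h4 : ε/R^4 ≤ |1 - (a j)^2|/(a j)^2 :=
      div_le_div₀ (abs_nonneg _) h1 (by positivity) h5
    rw [← e3] at h4
    linarith only [h4, hΛi j]
  have hΛpos : 0 < Λ := lt_of_lt_of_le (by positivity) hΛlb
  set Pf : EuclideanSpace ℝ (Fin n) → EuclideanSpace ℝ (Fin n) → ℝ :=
    fun x y => ∑ i, lam i * (⟪x, b i⟫ * ⟪y, b i⟫) with hPfdef
  have hPfbound : ∀ x y, |Pf x y| ≤ Λ * (‖x‖ * ‖y‖) :=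
    fun x y => cross_bound b lam hΛpos.le hΛi x y
  have hhom : ∀ (α : ℝ) (x : EuclideanSpace ℝ (Fin n)), Pf (α•x) (α•x) = α^2 * Pf x x :=
    fun α x => cross_homog b lam x α
  have hQid : ∀ x : EuclideanSpace ℝ (Fin n),
      ∑ i, ⟪x, b i⟫^2/(a i)^2 = ‖x‖^2 + Pf x x := by
    intro x
    have h1 : ∀ i : Fin n, ⟪x, b i⟫^2/(a i)^2
        = ⟪x, b i⟫^2 + lam i * (⟪x, b i⟫ * ⟪x, b i⟫) := by
      intro i
      have hai : (a i)^2 ≠ 0 := pow_ne_zero 2 (ne_of_gt (hapos i))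
      show _ = _ + (((a i)^2)⁻¹ - 1) * _
      field_simp
      ring
    rw [Finset.sum_congr rfl (fun i _ => h1 i), Finset.sum_add_distrib, parseval]
  -- cone direction
  have hb0 : ‖b ⟨0, by omega⟩‖ = 1 := b.orthonormal.1 _
  obtain ⟨x₀, hx₀⟩ : ∃ x₀, closedBall x₀ ρ₀ ⊆ σ' ∩ closedBall 0 1 := by
    have hSrne : {r : ℝ | ∃ x : EuclideanSpace ℝ (Fin n),
        closedBall x r ⊆ σ' ∩ closedBall 0 1}.Nonempty := by
      refine ⟨-1, 0, ?_⟩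
      rw [closedBall_eq_empty.2 (by norm_num : (-1:ℝ) < 0)]
      exact empty_subset _
    have hlt : ρ₀ < inradius (σ' ∩ closedBall 0 1) := by
      have h2 : ρ₀ < s/R := by
        rw [hρ₀def, div_lt_div_iff₀ (by positivity) hR0]
        nlinarith only [hs0, hR0]
      linarith only [h2, hinr]
    obtain ⟨r', hr'mem, hρr'⟩ := exists_lt_of_lt_csSup hSrne hlt
    obtain ⟨x₀, hx₀⟩ := hr'mem
    exact ⟨x₀, (closedBall_subset_closedBall hρr'.le).trans hx₀⟩
  obtain ⟨v, hv1, hv2⟩ := cone_dir hcone.2 _ hb0 x₀ hρ₀pos hx₀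
  -- 2-plane containing the extremal axis
  obtain ⟨f, c₀, s₀, hf1, hvf, hbjs, hcs⟩ := exists_orth_decomp hn b jstar v hv1
  set A : ℝ := Pf v v with hAdef
  set Bc : ℝ := Pf f f with hBdef
  set Cc : ℝ := 2 * Pf v f with hCdef
  have hAb : |A| ≤ Λ := by
    have := hPfbound v v; rw [hv1] at this; simpa using this
  have hBb : |Bc| ≤ Λ := by
    have := hPfbound f f; rw [hf1] at this; simpa using this
  have hCb : |Cc| ≤ 2*Λ := by
    have h := hPfbound v f; rw [hv1, hf1] at h
    have h2 : |Pf v f| ≤ Λ := by simpa using h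
    rw [hCdef, abs_mul, abs_two]
    linarith
  have hqex : ∀ t : ℝ, Pf (v + t•f) (v + t•f) = A + Cc*t + Bc*t^2 := by
    intro t
    have h := cross_expand b lam v f 1 t
    simp only [one_smul, one_pow, one_mul] at h
    show (∑ i, lam i * (⟪v + t•f, b i⟫ * ⟪v + t•f, b i⟫)) = _
    rw [h]
    simp only [hAdef, hBdef, hCdef, hPfdef]
    ring
  have hΛabc : Λ ≤ |A| + |Cc| + |Bc| := by
    have hPbj : Pf (b jstar) (b jstar) = lam jstar := by
      show (∑ i, lam i * (⟪b jstar, b i⟫ * ⟪b jstar, b i⟫)) = lam jstar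
      rw [Finset.sum_eq_single jstar]
      · rw [horth jstar jstar, if_pos rfl, mul_one, mul_one]
      · intro k _ hk
        rw [horth jstar k, if_neg (fun hcon => hk hcon.symm), mul_zero, mul_zero]
      · intro hcon; exact absurd (Finset.mem_univ jstar) hcon
    have hexp : Pf (b jstar) (b jstar) = c₀^2*A + (c₀*s₀)*Cc + s₀^2*Bc := by
      rw [hbjs]
      have h := cross_expand b lam v f c₀ s₀
      show (∑ i, lam i * (⟪c₀•v + s₀•f, b i⟫ * ⟪c₀•v + s₀•f, b i⟫)) = _
      rw [h]
      simp only [hAdef, hBdef, hCdef, hPfdef]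
      ring
    have hc₀1 : c₀^2 ≤ 1 := by nlinarith only [sq_nonneg s₀, hcs]
    have hs₀1 : s₀^2 ≤ 1 := by nlinarith only [sq_nonneg c₀, hcs]
    have hcs1 : |c₀*s₀| ≤ 1 := by
      rw [abs_mul]
      nlinarith only [sq_nonneg (|c₀|-|s₀|), sq_abs c₀, sq_abs s₀, abs_nonneg c₀,
        abs_nonneg s₀, hcs]
    have heq : Λ = |c₀^2*A + (c₀*s₀)*Cc + s₀^2*Bc| := by
      rw [hΛdef, hjstar, ← hPbj, hexp]
    rw [heq]
    have e1 : |c₀^2| = c₀^2 := abs_of_nonneg (sq_nonneg _)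
    have e2 : |s₀^2| = s₀^2 := abs_of_nonneg (sq_nonneg _)
    have g1 : |c₀^2*A| ≤ |A| := by
      rw [abs_mul, e1]; exact mul_le_of_le_one_left (abs_nonneg A) hc₀1
    have g2 : |(c₀*s₀)*Cc| ≤ |Cc| := by
      rw [abs_mul]; exact mul_le_of_le_one_left (abs_nonneg Cc) hcs1
    have g3 : |s₀^2*Bc| ≤ |Bc| := by
      rw [abs_mul, e2]; exact mul_le_of_le_one_left (abs_nonneg Bc) hs₀1
    calc |c₀^2*A + (c₀*s₀)*Cc + s₀^2*Bc|
        ≤ |c₀^2*A| + |(c₀*s₀)*Cc| + |s₀^2*Bc| := abs_add_three _ _ _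
      _ ≤ |A| + |Cc| + |Bc| := by linarith only [g1, g2, g3]
  -- three-point interpolation: a point with large |q|
  obtain ⟨tstar, htsabs, htsM⟩ : ∃ t : ℝ, |t| ≤ τ ∧ Λ*τ^2/4 ≤ |A + Cc*t + Bc*t^2| := by
    set ep : ℝ := A + Cc*τ + Bc*τ^2 with hepdef
    set em : ℝ := A - Cc*τ + Bc*τ^2 with hemdef
    set M3 : ℝ := max |em| (max |A| |ep|) with hM3def
    have hM30 : 0 ≤ M3 := le_trans (abs_nonneg em) (le_max_left _ _)
    have hem : |em| ≤ M3 := le_max_left _ _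
    have hA3 : |A| ≤ M3 := le_trans (le_max_left _ _) (le_max_right _ _)
    have hep : |ep| ≤ M3 := le_trans (le_max_right _ _) (le_max_right _ _)
    have hτsq1 : τ^2 ≤ 1 := by nlinarith only [hτ1, hτpos]
    have hB3 : |Bc| * (2*τ^2) ≤ 4*M3 := by
      have hid : Bc*(2*τ^2) = ep + em - 2*A := by rw [hepdef, hemdef]; ring
      have h0 := abs_mul Bc (2*τ^2)
      rw [abs_of_nonneg (by positivity : (0:ℝ) ≤ 2*τ^2)] at h0
      rw [← h0, hid]
      have t1 := abs_add_le (ep + em) (-(2*A))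
      have t2 := abs_add_le ep em
      have t3 : |(-(2*A))| = 2*|A| := by rw [abs_neg, abs_mul]; norm_num
      have t4 : ep + em - 2*A = (ep + em) + (-(2*A)) := by ring
      rw [t4]
      linarith only [t1, t2, t3, hep, hem, hA3]
    have hC3 : |Cc| * (2*τ) ≤ 2*M3 := by
      have hid : Cc*(2*τ) = ep - em := by rw [hepdef, hemdef]; ring
      have h0 := abs_mul Cc (2*τ)
      rw [abs_of_nonneg (by positivity : (0:ℝ) ≤ 2*τ)] at h0
      rw [← h0, hid]
      have t1 := abs_add_le ep (-em)
      have t2 : |(-em)| = |em| := abs_neg em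
      have t4 : ep - em = ep + (-em) := by ring
      rw [t4]
      linarith only [t1, t2, hep, hem]
    have hmain : Λ*τ^2 ≤ 4*M3 := by
      have h1 : Λ*τ^2 ≤ (|A| + |Cc| + |Bc|)*τ^2 :=
        mul_le_mul_of_nonneg_right hΛabc (by positivity)
      have h2 : |A| * τ^2 ≤ M3 := by
        have := mul_le_of_le_one_right (abs_nonneg A) hτsq1
        linarith only [this, hA3]
      have h3 : |Cc| * τ^2 ≤ M3 := by
        have e5 : |Cc| * τ^2 = (|Cc| * (2*τ))*(τ/2) := by ring
        have e6 := mul_le_mul_of_nonneg_right hC3 (by positivity : (0:ℝ) ≤ τ/2)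
        have e7 : 2*M3*(τ/2) = M3*τ := by ring
        have e8 : M3*τ ≤ M3*1 := mul_le_mul_of_nonneg_left hτ1 hM30
        rw [e5]
        linarith only [e6, e7 ▸ e6, e8]
      have h4 : |Bc| * τ^2 ≤ 2*M3 := by
        have e5 : |Bc| * τ^2 = (|Bc| * (2*τ^2))/2 := by ring
        rw [e5]
        linarith only [hB3]
      linarith only [h1, h2, h3, h4]
    have hM3q : Λ*τ^2/4 ≤ M3 := by linarith only [hmain]
    have hM3cases : M3 = |em| ∨ M3 = |A| ∨ M3 = |ep| := by
      rcases max_choice |em| (max |A| |ep|) with h | h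
      · exact Or.inl h
      · rcases max_choice |A| |ep| with h2 | h2
        · exact Or.inr (Or.inl (h.trans h2))
        · exact Or.inr (Or.inr (h.trans h2))
    rcases hM3cases with h | h | h
    · refine ⟨-τ, by rw [abs_neg, abs_of_pos hτpos], ?_⟩
      have he : A + Cc*(-τ) + Bc*(-τ)^2 = em := by rw [hemdef]; ring
      rw [he, ← h]
      exact hM3q
    · refine ⟨0, by rw [abs_zero]; exact hτpos.le, ?_⟩
      have he : A + Cc*(0:ℝ) + Bc*(0:ℝ)^2 = A := by ring
      rw [he, ← h]
      exact hM3q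
    · refine ⟨τ, by rw [abs_of_pos hτpos], ?_⟩
      have he : A + Cc*τ + Bc*τ^2 = ep := by rw [hepdef]
      rw [he, ← h]
      exact hM3q
  set qs : ℝ := A + Cc*tstar + Bc*tstar^2 with hqsdef
  have hqLip : ∀ t t' : ℝ, |t| ≤ τ → |t'| ≤ τ →
      |(A + Cc*t + Bc*t^2) - (A + Cc*t' + Bc*t'^2)| ≤ 4*Λ*|t-t'| := by
    intro t t' ht ht'
    have hid : (A + Cc*t + Bc*t^2) - (A + Cc*t' + Bc*t'^2) = (t - t')*(Cc + Bc*(t+t')) := by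
      ring
    rw [hid, abs_mul]
    have h1 : |Cc + Bc*(t+t')| ≤ 4*Λ := by
      have h3 : |t+t'| ≤ 2 := by
        have h4 := abs_add_le t t'
        linarith only [h4, ht, ht', hτ1]
      have h2 : |Bc*(t+t')| ≤ Λ*2 := by
        rw [abs_mul]
        exact mul_le_mul hBb h3 (abs_nonneg _) hΛpos.le
      have h5 := abs_add_le Cc (Bc*(t+t'))
      linarith only [h5, hCb, h2]
    calc |t-t'| * |Cc + Bc*(t+t')| ≤ |t-t'| * (4*Λ) :=
          mul_le_mul_of_nonneg_left h1 (abs_nonneg _)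
      _ = 4*Λ*|t-t'| := by ring
  set t₀ : ℝ := if 0 < tstar then tstar - ℓ₀ else tstar with ht₀def
  have hJsub : -τ ≤ t₀ ∧ t₀ + ℓ₀ ≤ τ := by
    rw [ht₀def]
    rcases abs_le.mp htsabs with ⟨hl, hr⟩
    split_ifs with h
    · constructor <;> linarith only [hl, hr, hℓτ, hℓpos, h]
    · push_neg at h
      constructor <;> linarith only [hl, hr, hℓτ, hℓpos, h]
  have hJts : ∀ t ∈ Icc t₀ (t₀+ℓ₀), |t - tstar| ≤ ℓ₀ := by
    intro t ht
    obtain ⟨h1, h2⟩ := ht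
    rw [ht₀def] at h1 h2
    rw [abs_le]
    split_ifs at h1 h2 with h
    · constructor <;> linarith only [h1, h2, hℓpos]
    · constructor <;> linarith only [h1, h2, hℓpos]
  have htsM' : Λ*τ^2/4 ≤ |qs| := htsM
  have hJq : ∀ t ∈ Icc t₀ (t₀+ℓ₀),
      (0 ≤ qs → Λ*τ^2/8 ≤ A + Cc*t + Bc*t^2) ∧
      (qs < 0 → A + Cc*t + Bc*t^2 ≤ -(Λ*τ^2/8)) := by
    intro t ht
    have htτ : |t| ≤ τ := by
      rcases ht with ⟨h1, h2⟩
      rw [abs_le]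
      exact ⟨by linarith only [h1, hJsub.1], by linarith only [h2, hJsub.2]⟩
    have hlip := hqLip t tstar htτ htsabs
    have hts := hJts t ht
    have h48 : 4*Λ*|t - tstar| ≤ Λ*τ^2/8 := by
      have h9 := mul_le_mul_of_nonneg_left hts (by positivity : (0:ℝ) ≤ 4*Λ)
      have h10 : 4*Λ*ℓ₀ = Λ*τ^2/8 := by rw [hℓdef]; ring
      linarith only [h9, h10]
    have hcomb : |(A + Cc*t + Bc*t^2) - qs| ≤ Λ*τ^2/8 := le_trans hlip h48
    have habs := abs_le.mp hcomb
    constructor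
    · intro hq
      have hqs4 : Λ*τ^2/4 ≤ qs := by rwa [abs_of_nonneg hq] at htsM'
      linarith only [habs.1, hqs4]
    · intro hq
      have hqs4 : qs ≤ -(Λ*τ^2/4) := by
        rw [abs_of_neg hq] at htsM'
        linarith only [htsM']
      linarith only [habs.2, hqs4]
  -- unit directions along the geodesic
  set u : ℝ → EuclideanSpace ℝ (Fin n) := fun t => (‖v + t•f‖)⁻¹ • (v + t•f) with hudef
  have hzsq : ∀ t : ℝ, ‖v + t•f‖^2 = 1 + t^2 := by
    intro t
    rw [norm_add_sq_real, hv1, real_inner_smul_right, hvf, norm_smul, Real.norm_eq_abs,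
      mul_pow, sq_abs, hf1]
    ring
  have hznorm1 : ∀ t : ℝ, 1 ≤ ‖v + t•f‖ := by
    intro t
    nlinarith only [hzsq t, norm_nonneg (v + t•f), sq_nonneg t]
  have hun : ∀ t, ‖u t‖ = 1 := by
    intro t
    have hpos : (0:ℝ) < ‖v + t•f‖ := lt_of_lt_of_le one_pos (hznorm1 t)
    show ‖(‖v + t•f‖)⁻¹ • (v + t•f)‖ = 1
    rw [norm_smul, norm_inv, norm_norm, inv_mul_cancel₀ hpos.ne']
  have huP : ∀ t, (1+t^2) * Pf (u t) (u t) = A + Cc*t + Bc*t^2 := by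
    intro t
    have hpos : (0:ℝ) < ‖v + t•f‖ := lt_of_lt_of_le one_pos (hznorm1 t)
    have h1 : Pf (u t) (u t) = (‖v + t•f‖⁻¹)^2 * Pf (v + t•f) (v + t•f) := by
      show Pf ((‖v + t•f‖)⁻¹ • (v + t•f)) ((‖v + t•f‖)⁻¹ • (v + t•f)) = _
      exact hhom _ _
    rw [h1, hqex t, inv_pow, hzsq t]
    have h2 : (1 + t^2) ≠ 0 := by positivity
    field_simp
  have huv : ∀ t : ℝ, |t| ≤ τ → ‖u t - v‖ ≤ τ^2 + τ := by
    intro t ht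
    have hN1 := hznorm1 t
    have hNpos : (0:ℝ) < ‖v + t•f‖ := lt_of_lt_of_le one_pos hN1
    have h1 : u t - v = ((‖v + t•f‖)⁻¹ - 1) • (v + t•f) + t•f := by
      show (‖v + t•f‖)⁻¹ • (v + t•f) - v = _
      rw [sub_smul, one_smul]
      abel
    have h2 : ‖u t - v‖ ≤ ‖((‖v + t•f‖)⁻¹ - 1) • (v + t•f)‖ + ‖t•f‖ := by
      rw [h1]; exact norm_add_le _ _
    have h3 : ‖((‖v + t•f‖)⁻¹ - 1) • (v + t•f)‖ = ‖v + t•f‖ - 1 := by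
      rw [norm_smul, Real.norm_eq_abs,
        abs_of_nonpos (by
          have := inv_le_one_of_one_le₀ hN1
          linarith only [this] : (‖v + t•f‖)⁻¹ - 1 ≤ 0)]
      have hne := hNpos.ne'
      field_simp
      ring
    have h4 : ‖v + t•f‖ - 1 ≤ t^2 := by nlinarith only [hzsq t, hN1]
    have h5 : ‖t•f‖ ≤ τ := by
      rw [norm_smul, Real.norm_eq_abs, hf1, mul_one]; exact ht
    have h6 : t^2 ≤ τ^2 := by
      have h7 := pow_le_pow_left₀ (abs_nonneg t) ht 2
      rwa [sq_abs] at h7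
    linarith only [h2, h3, h4, h5, h6]
  -- the cone sector
  set SS : Set (EuclideanSpace ℝ (Fin n)) :=
    {x | ∃ t ∈ Icc t₀ (t₀+ℓ₀), ‖x - ‖x‖ • u t‖ ≤ w * ‖x‖} with hSSdef
  have hSSmem : ∀ r : ℝ, 0 < r → ∀ x ∈ SS, r • x ∈ SS := by
    intro r hr x hx
    simp only [hSSdef, mem_setOf_eq] at hx ⊢
    obtain ⟨t, htJ, hxt⟩ := hx
    refine ⟨t, htJ, ?_⟩
    have hnorm : ‖r • x‖ = r * ‖x‖ := by
      rw [norm_smul, Real.norm_eq_abs, abs_of_pos hr]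
    have heq : r • x - ‖r • x‖ • u t = r • (x - ‖x‖ • u t) := by
      rw [hnorm, smul_sub, mul_smul]
    rw [heq, norm_smul, Real.norm_eq_abs, abs_of_pos hr, hnorm]
    calc r * ‖x - ‖x‖ • u t‖ ≤ r * (w * ‖x‖) := mul_le_mul_of_nonneg_left hxt hr.le
      _ = w * (r * ‖x‖) := by ring
  have hSSsmul : ∀ r : ℝ, 0 < r → r • SS = SS := by
    intro r hr
    apply Subset.antisymm
    · rintro y ⟨x, hx, rfl⟩
      exact hSSmem r hr x hx
    · intro x hx
      exact ⟨r⁻¹ • x, hSSmem r⁻¹ (inv_pos.2 hr) x hx, smul_inv_smul₀ hr.ne' x⟩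
  have hr164 : r₁ ≤ 1/64 := by rw [hr₁def]; linarith only [hw8]
  have hSSball : closedBall ((2:ℝ)⁻¹ • u (t₀+ℓ₀/2)) r₁ ⊆ SS ∩ closedBall 0 1 := by
    intro x hx
    rw [mem_closedBall, dist_eq_norm] at hx
    have htc : t₀ + ℓ₀/2 ∈ Icc t₀ (t₀+ℓ₀) :=
      ⟨by linarith only [hℓpos], by linarith only [hℓpos]⟩
    have huc := hun (t₀+ℓ₀/2)
    have hxc : ‖(2:ℝ)⁻¹ • u (t₀+ℓ₀/2)‖ = 1/2 := by
      rw [norm_smul, Real.norm_eq_abs, huc, mul_one]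
      norm_num
    have habs := abs_norm_sub_norm_le x ((2:ℝ)⁻¹ • u (t₀+ℓ₀/2))
    rw [hxc] at habs
    rcases abs_le.mp habs with ⟨hd2', hd1'⟩
    have hd1 : ‖x‖ ≤ 1/2 + r₁ := by linarith only [hd1', hx]
    have hd2 : 1/2 - r₁ ≤ ‖x‖ := by linarith only [hd2', hx]
    constructor
    · simp only [hSSdef, mem_setOf_eq]
      refine ⟨t₀+ℓ₀/2, htc, ?_⟩
      have hsplit : x - ‖x‖ • u (t₀+ℓ₀/2)
          = (x - (2:ℝ)⁻¹ • u (t₀+ℓ₀/2)) + ((2:ℝ)⁻¹ - ‖x‖) • u (t₀+ℓ₀/2) := by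
        rw [sub_smul]
        abel
      rw [hsplit]
      have hn2 : ‖((2:ℝ)⁻¹ - ‖x‖) • u (t₀+ℓ₀/2)‖ ≤ r₁ := by
        rw [norm_smul, Real.norm_eq_abs, huc, mul_one, abs_le]
        constructor <;> linarith only [hd1, hd2]
      calc ‖(x - (2:ℝ)⁻¹ • u (t₀+ℓ₀/2)) + ((2:ℝ)⁻¹ - ‖x‖) • u (t₀+ℓ₀/2)‖
          ≤ ‖x - (2:ℝ)⁻¹ • u (t₀+ℓ₀/2)‖ + ‖((2:ℝ)⁻¹ - ‖x‖) • u (t₀+ℓ₀/2)‖ :=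
            norm_add_le _ _
        _ ≤ r₁ + r₁ := add_le_add hx hn2
        _ = w * (1/4) := by rw [hr₁def]; ring
        _ ≤ w * ‖x‖ := by
            refine mul_le_mul_of_nonneg_left ?_ hwpos.le
            linarith only [hd2, hr164]
    · rw [mem_closedBall, dist_zero_right]
      linarith only [hd1, hr164]
  have hVlb : V₀ ≤ volume (SS ∩ closedBall 0 1) := by
    calc V₀ = volume (closedBall ((2:ℝ)⁻¹ • u (t₀+ℓ₀/2)) r₁) :=
          (Measure.addHaar_closedBall_center volume _ r₁).symm
      _ ≤ volume (SS ∩ closedBall 0 1) := measure_mono hSSball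
  set κ' : ℝ := min (Λ*τ^2/32) (1/2) with hκdef
  have hκpos : 0 < κ' := lt_min (by positivity) (by norm_num)
  have hκhalf : κ' ≤ 1/2 := min_le_right _ _
  have hκΛ : κ' ≤ Λ*τ^2/32 := min_le_left _ _
  have hκc₁ : c₁*ε ≤ κ' := by
    rcases min_cases (Λ*τ^2/32) (1/2 : ℝ) with ⟨he, hcm⟩ | ⟨he, hcm⟩
    · rw [hκdef, he]
      have h1 : c₁ ≤ τ^2/(32*R^4) := min_le_left _ _
      have h2 : c₁*ε ≤ τ^2/(32*R^4)*ε := mul_le_mul_of_nonneg_right h1 hε0.le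
      have h4 := mul_le_mul_of_nonneg_right hΛlb (by positivity : (0:ℝ) ≤ τ^2/32)
      have h3 : τ^2/(32*R^4)*ε ≤ Λ*τ^2/32 := by
        have e1 : τ^2/(32*R^4)*ε = ε/R^4*(τ^2/32) := by ring
        have e2 : Λ*(τ^2/32) = Λ*τ^2/32 := by ring
        linarith only [h4, e1 ▸ h2, e1.symm ▸ h4, e2 ▸ h4]
      linarith only [h2, h3]
    · rw [hκdef, he]
      have h2 : c₁*ε ≤ 1*ε := mul_le_mul_of_nonneg_right hc₁le hε0.le
      linarith only [h2, hε2]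
  -- key membership facts for points of the sector
  have hkey : ∀ x : EuclideanSpace ℝ (Fin n), x ∈ SS → x ≠ 0 → x ∈ σ'
      ∧ (0 ≤ qs → Λ*τ^2/32 * ‖x‖^2 ≤ Pf x x)
      ∧ (qs < 0 → Pf x x ≤ -(Λ*τ^2/32) * ‖x‖^2) := by
    intro x hxSS hxne
    simp only [hSSdef, mem_setOf_eq] at hxSS
    obtain ⟨t, htJ, hxt⟩ := hxSS
    have hxn : (0:ℝ) < ‖x‖ := norm_pos_iff.2 hxne
    have htτ : |t| ≤ τ := by
      rcases htJ with ⟨h1, h2⟩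
      rw [abs_le]
      exact ⟨by linarith only [h1, hJsub.1], by linarith only [h2, hJsub.2]⟩
    have hu'c : ‖‖x‖⁻¹ • x - u t‖ ≤ w := by
      have heq : ‖x‖⁻¹ • x - u t = ‖x‖⁻¹ • (x - ‖x‖ • u t) := by
        rw [smul_sub, inv_smul_smul₀ hxn.ne']
      rw [heq, norm_smul, norm_inv, norm_norm]
      have hc1 : ‖x‖⁻¹ * ‖x - ‖x‖ • u t‖ ≤ ‖x‖⁻¹ * (w * ‖x‖) :=
        mul_le_mul_of_nonneg_left hxt (by positivity)
      have hc2 : ‖x‖⁻¹ * (w * ‖x‖) = w := by field_simp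
      linarith only [hc1, hc2]
    have hu'1 : ‖‖x‖⁻¹ • x‖ = 1 := by
      rw [norm_smul, norm_inv, norm_norm, inv_mul_cancel₀ hxn.ne']
    have hσx : x ∈ σ' := by
      apply hv2 x hxne
      have h1 := huv t htτ
      have htri := dist_triangle (‖x‖⁻¹ • x) (u t) v
      rw [dist_eq_norm, dist_eq_norm, dist_eq_norm] at htri
      have hτsq : τ^2 ≤ τ := by nlinarith only [hτpos, hτ1]
      have hτval : τ = ρ₀/4 := hτdef
      linarith only [htri, hu'c, h1, hw1, hτsq, hτval]
    have hdiff : |Pf (‖x‖⁻¹ • x) (‖x‖⁻¹ • x) - Pf (u t) (u t)| ≤ 2*Λ*w := by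
      have h1 := cross_diff b lam (‖x‖⁻¹ • x) (u t)
      have h2 := cross_bound b lam hΛpos.le hΛi (‖x‖⁻¹ • x + u t) (‖x‖⁻¹ • x - u t)
      have h3 : ‖‖x‖⁻¹ • x + u t‖ ≤ 2 := by
        have h4 := norm_add_le (‖x‖⁻¹ • x) (u t)
        rw [hu'1, hun t] at h4
        linarith only [h4]
      have h5 : |Pf (‖x‖⁻¹ • x) (‖x‖⁻¹ • x) - Pf (u t) (u t)|
          = |∑ i, lam i * (⟪‖x‖⁻¹ • x + u t, b i⟫ * ⟪‖x‖⁻¹ • x - u t, b i⟫)| := by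
        simp only [hPfdef]
        rw [h1]
      rw [h5]
      have h6 : ‖‖x‖⁻¹ • x + u t‖ * ‖‖x‖⁻¹ • x - u t‖ ≤ 2 * w :=
        mul_le_mul h3 hu'c (norm_nonneg _) (by norm_num)
      have h7 := mul_le_mul_of_nonneg_left h6 hΛpos.le
      have h8 : Λ * (2*w) = 2*Λ*w := by ring
      linarith only [h2, h7, h8]
    have hPut := huP t
    have hhx : Pf x x = ‖x‖^2 * Pf (‖x‖⁻¹ • x) (‖x‖⁻¹ • x) := by
      have h5 := hhom ‖x‖ (‖x‖⁻¹ • x)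
      rw [smul_inv_smul₀ hxn.ne'] at h5
      exact h5
    have h6 : t^2 ≤ 1 := by
      have h7 := pow_le_pow_left₀ (abs_nonneg t) htτ 2
      rw [sq_abs] at h7
      nlinarith only [h7, hτ1, hτpos]
    have ht2a : (1:ℝ) ≤ 1 + t^2 := by nlinarith only [sq_nonneg t]
    have ht2b : 1 + t^2 ≤ 2 := by linarith only [h6]
    have h2Λw : 2*Λ*w ≤ Λ*τ^2/32 := by
      have h9 := mul_le_mul_of_nonneg_left hw2 (by positivity : (0:ℝ) ≤ 2*Λ)
      have h10 : 2*Λ*(τ^2/64) = Λ*τ^2/32 := by ring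
      linarith only [h9, h10]
    have habs := abs_le.mp hdiff
    refine ⟨hσx, ?_, ?_⟩
    · intro hq
      have hqt := (hJq t htJ).1 hq
      have hPnn : 0 ≤ Pf (u t) (u t) := by
        nlinarith only [hPut, hqt, ht2a, hτpos, hΛpos]
      have hPut_lb : Λ*τ^2/16 ≤ Pf (u t) (u t) := by
        nlinarith only [hPut, hqt, ht2b, hPnn, h6]
      have hPu' : Λ*τ^2/32 ≤ Pf (‖x‖⁻¹ • x) (‖x‖⁻¹ • x) := by
        linarith only [habs.1, hPut_lb, h2Λw]
      rw [hhx]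
      have := mul_le_mul_of_nonneg_right hPu' (sq_nonneg ‖x‖)
      linarith only [this]
    · intro hq
      have hqt := (hJq t htJ).2 hq
      have hPnp : Pf (u t) (u t) ≤ 0 := by
        nlinarith only [hPut, hqt, ht2a, hτpos, hΛpos]
      have hPut_ub : Pf (u t) (u t) ≤ -(Λ*τ^2/16) := by
        nlinarith only [hPut, hqt, ht2b, hPnp, h6]
      have hPu' : Pf (‖x‖⁻¹ • x) (‖x‖⁻¹ • x) ≤ -(Λ*τ^2/32) := by
        linarith only [habs.2, hPut_ub, h2Λw]
      rw [hhx]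
      have := mul_le_mul_of_nonneg_right hPu' (sq_nonneg ‖x‖)
      linarith only [this]
  have hfin : volume ((Etil ∆ closedBall 0 1) ∩ σ') ≠ ⊤ := by
    have hsub : (Etil ∆ closedBall 0 1) ∩ σ' ⊆ closedBall (0 : EuclideanSpace ℝ (Fin n)) (R^2) := by
      intro x hx
      rcases Set.mem_symmDiff.mp hx.1 with ⟨hE, -⟩ | ⟨hB, -⟩
      · exact hEout hE
      · exact closedBall_subset_closedBall hR21 hB
    exact ne_top_of_le_ne_top measure_closedBall_lt_top.ne (measure_mono hsub)
  -- main volume bound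
  suffices hmain : ENNReal.ofReal (γ*κ') * V₀ ≤ volume ((Etil ∆ closedBall 0 1) ∩ σ') by
    have h1 : ((ENNReal.ofReal (γ*κ')) * V₀).toReal = γ*κ'*V₀.toReal := by
      rw [ENNReal.toReal_mul, ENNReal.toReal_ofReal (by positivity)]
    have h2 := ENNReal.toReal_mono hfin hmain
    rw [h1] at h2
    have h3 : c*ε ≤ γ*κ'*V₀.toReal := by
      have hcle : c ≤ γ*c₁*V₀.toReal := min_le_right _ _
      calc c*ε ≤ (γ*c₁*V₀.toReal)*ε := mul_le_mul_of_nonneg_right hcle hε0.le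
        _ = γ*(c₁*ε)*V₀.toReal := by ring
        _ ≤ γ*κ'*V₀.toReal := by
            have h5 := mul_le_mul_of_nonneg_left hκc₁ hγpos.le
            exact mul_le_mul_of_nonneg_right h5 hV₀r.le
    linarith only [h2, h3]
  have hγκpos : 0 < γ*κ' := mul_pos hγpos hκpos
  have hγκ : γ*κ' ≤ 1/16 := by
    have h := mul_le_mul hγ8 hκhalf hκpos.le (by norm_num : (0:ℝ) ≤ 1/8)
    linarith only [h]
  have hgk : γ*κ' ≤ κ'/8 := by nlinarith only [hγ8, hκpos]
  rcases le_or_gt 0 qs with hsgn | hsgn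
  · -- inner shell: points of B \ Etil
    have hGsub : (SS ∩ closedBall 0 1) \ closedBall 0 (1 - γ*κ')
        ⊆ (Etil ∆ closedBall 0 1) ∩ σ' := by
      rintro x ⟨⟨hxSS, hx1⟩, hxout⟩
      rw [mem_closedBall, dist_zero_right, not_le] at hxout
      have hxne : x ≠ 0 := by
        intro h; rw [h, norm_zero] at hxout; linarith only [hxout, hγκ]
      obtain ⟨hσx, hpos', -⟩ := hkey x hxSS hxne
      have hP := hpos' hsgn
      have hκP : κ' * ‖x‖^2 ≤ Pf x x := by
        have h11 := mul_le_mul_of_nonneg_right hκΛ (sq_nonneg ‖x‖)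
        linarith only [h11, hP]
      have hx1' : ‖x‖ ≤ 1 := by rwa [mem_closedBall, dist_zero_right] at hx1
      have hxsq : (1-γ*κ')^2 < ‖x‖^2 := by
        nlinarith only [hxout, hγκ, norm_nonneg x]
      have hQgt : 1 < ∑ i, ⟪x, b i⟫^2/(a i)^2 := by
        rw [hQid x]
        have e1 : (1+κ')*‖x‖^2 ≤ ‖x‖^2 + Pf x x := by linarith only [hκP]
        have e2 : (1+κ')*(1-γ*κ')^2 ≤ (1+κ')*‖x‖^2 :=
          mul_le_mul_of_nonneg_left hxsq.le (by linarith only [hκpos])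
        have e3 : 1 < (1+κ')*(1-γ*κ')^2 := by
          nlinarith only [hκpos, hκhalf, hgk, hγκ, hγκpos, sq_nonneg (γ*κ')]
        linarith only [e1, e2, e3]
      refine ⟨?_, hσx⟩
      rw [Set.mem_symmDiff]
      right
      refine ⟨by rwa [mem_closedBall, dist_zero_right], ?_⟩
      rw [hEdef]
      simp only [mem_setOf_eq, not_le]
      exact hQgt
    calc ENNReal.ofReal (γ*κ') * V₀
        ≤ ENNReal.ofReal (γ*κ') * volume (SS ∩ closedBall 0 1) := mul_le_mul_right hVlb _
      _ ≤ volume ((SS ∩ closedBall 0 1) \ closedBall 0 (1 - γ*κ')) := by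
          refine shell_volume SS hSSsmul (by linarith only [hγκ])
            (by linarith only [hγκpos]) (le_of_lt hγκpos) ?_
          have hp : (1 - γ*κ')^n ≤ 1 - γ*κ' :=
            pow_le_of_le_one (by linarith only [hγκ]) (by linarith only [hγκpos]) (by omega)
          calc (1 - γ*κ')^n + γ*κ' ≤ (1 - γ*κ') + γ*κ' := by linarith only [hp]
            _ = 1 := by ring
            _ = 1^n := (one_pow n).symm
      _ ≤ volume ((Etil ∆ closedBall 0 1) ∩ σ') := measure_mono hGsub
  · -- outer shell: points of Etil \ B
    have hGsub : (SS ∩ closedBall 0 (1 + γ*κ')) \ closedBall 0 1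
        ⊆ (Etil ∆ closedBall 0 1) ∩ σ' := by
      rintro x ⟨⟨hxSS, hxrout⟩, hxout⟩
      rw [mem_closedBall, dist_zero_right, not_le] at hxout
      have hxne : x ≠ 0 := by
        intro h; rw [h, norm_zero] at hxout; linarith only [hxout]
      obtain ⟨hσx, -, hneg'⟩ := hkey x hxSS hxne
      have hP := hneg' hsgn
      have hκP : Pf x x ≤ -κ' * ‖x‖^2 := by
        have h11 := mul_le_mul_of_nonneg_right hκΛ (sq_nonneg ‖x‖)
        linarith only [h11, hP]
      have hxrout' : ‖x‖ ≤ 1 + γ*κ' := by rwa [mem_closedBall, dist_zero_right] at hxrout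
      have hQle : ∑ i, ⟪x, b i⟫^2/(a i)^2 ≤ 1 := by
        rw [hQid x]
        have e1 : ‖x‖^2 + Pf x x ≤ (1-κ')*‖x‖^2 := by linarith only [hκP]
        have hxsq : ‖x‖^2 ≤ (1+γ*κ')^2 := by
          nlinarith only [hxrout', hxout, norm_nonneg x, hγκpos]
        have e2 : (1-κ')*‖x‖^2 ≤ (1-κ')*(1+γ*κ')^2 :=
          mul_le_mul_of_nonneg_left hxsq (by linarith only [hκhalf])
        have e3 : (1-κ')*(1+γ*κ')^2 ≤ 1 := by
          nlinarith only [hκpos, hκhalf, hgk, hγκ, hγκpos, mul_pos hγκpos hκpos,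
            mul_le_mul_of_nonneg_right hγκ hγκpos.le, mul_le_mul_of_nonneg_right hgk hκpos.le]
        linarith only [e1, e2, e3]
      refine ⟨?_, hσx⟩
      rw [Set.mem_symmDiff]
      left
      constructor
      · rw [hEdef]
        simp only [mem_setOf_eq]
        exact hQle
      · simp only [mem_closedBall, dist_zero_right, not_le]
        exact hxout
    calc ENNReal.ofReal (γ*κ') * V₀
        ≤ ENNReal.ofReal (γ*κ') * volume (SS ∩ closedBall 0 1) := mul_le_mul_right hVlb _
      _ ≤ volume ((SS ∩ closedBall 0 (1 + γ*κ')) \ closedBall 0 1) := by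
          refine shell_volume SS hSSsmul one_pos (by linarith only [hγκpos])
            (le_of_lt hγκpos) ?_
          rw [one_pow]
          have hp : 1 + γ*κ' ≤ (1 + γ*κ')^n :=
            le_self_pow₀ (by linarith only [hγκpos]) (by omega)
          linarith only [hp]
      _ ≤ volume ((Etil ∆ closedBall 0 1) ∩ σ') := measure_mono hGsub
end
end
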